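/- arXiv:1003.3386 — 7 statements merged into one kernel-verified Lean document; each statement's English description precedes it below -/
import Mathlib

section
/- Let p be a prime, F_q a finite field of characteristic p, and s_1, s_2 positive integers. In the quotient ring R̂ = F_q[x,y]/⟨x^{p^{s_1}} − 1, y^{p^{s_2}} − 1⟩, the ideal generated by the class of (x − 1)(y − 1) is not equal to the ideal generated by the classes of (x − 1)^m and (y − 1)^n for any integers m, n with 0 < m < p^{s_1} and 0 < n < p^{s_2}. -/
open MvPolynomial

/-- In `F_q[x,y]/⟨x^{p^{s₁}} − 1, y^{p^{s₂}} − 1⟩`, the ideal generated by the class of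
`(x − 1)(y − 1)` is not of the form `⟨(x − 1)^m, (y − 1)^n⟩` with `0 < m < p^{s₁}`,
`0 < n < p^{s₂}`. -/
theorem stmt_1 (p : ℕ) (hp : p.Prime) (F : Type) [Field F] [Fintype F] [CharP F p]
    (s₁ s₂ : ℕ) (hs₁ : 0 < s₁) (hs₂ : 0 < s₂)
    (I : Ideal (MvPolynomial (Fin 2) F))
    (hI : I = Ideal.span {X 0 ^ p ^ s₁ - 1, X 1 ^ p ^ s₂ - 1})
    (m n : ℕ) (hm : 0 < m) (hm' : m < p ^ s₁) (hn : 0 < n) (hn' : n < p ^ s₂) :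
    Ideal.span {Ideal.Quotient.mk I ((X 0 - 1) * (X 1 - 1))} ≠
      Ideal.span {Ideal.Quotient.mk I ((X 0 - 1) ^ m), Ideal.Quotient.mk I ((X 1 - 1) ^ n)} := by
  intro h
  have hmem : Ideal.Quotient.mk I ((X 0 - 1) ^ m) ∈
      Ideal.span {Ideal.Quotient.mk I ((X 0 - 1) * (X 1 - 1))} := by
    rw [h]
    exact Ideal.subset_span (by simp)
  rw [Ideal.mem_span_singleton] at hmem
  obtain ⟨c, hc⟩ := hmem
  obtain ⟨f, rfl⟩ := Ideal.Quotient.mk_surjective c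
  rw [← map_mul, ← sub_eq_zero, ← map_sub, Ideal.Quotient.eq_zero_iff_mem, hI,
    Ideal.mem_span_pair] at hc
  obtain ⟨a, b, hab⟩ := hc
  set φ : MvPolynomial (Fin 2) F →ₐ[F] Polynomial F := aeval ![Polynomial.X, 1] with hφ
  have := congrArg φ hab
  have hφ0 : φ (X 0) = Polynomial.X := by simp [hφ]
  have hφ1 : φ (X 1) = 1 := by simp [hφ]
  simp only [map_add, map_mul, map_sub, map_pow, map_one, hφ0, hφ1, sub_self, mul_zero,
    zero_mul, add_zero, sub_zero, zero_sub, one_pow] at this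
  -- this : φ a * (X ^ p ^ s₁ - 1) + φ b * 0? check
  -- this : φ a * (X ^ p ^ s₁ - 1) = (X - 1) ^ m
  have hXm : ((Polynomial.X - 1 : Polynomial F) ^ m).Monic := by
    exact (Polynomial.monic_X_sub_C (1 : F)).pow m
  have hP : (Polynomial.X ^ p ^ s₁ - 1 : Polynomial F).natDegree = p ^ s₁ := by
    simpa using Polynomial.natDegree_X_pow_sub_C (n := p ^ s₁) (r := (1 : F))
  have hPne : (Polynomial.X ^ p ^ s₁ - 1 : Polynomial F) ≠ 0 := by
    intro h0
    have := hP
    rw [h0] at this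
    simp at this
    omega
  have ha : φ a ≠ 0 := by
    intro h0
    rw [h0, zero_mul] at this
    exact hXm.ne_zero this.symm
  have hdeg := congrArg Polynomial.natDegree this
  rw [Polynomial.natDegree_mul ha hPne, hP, Polynomial.natDegree_pow] at hdeg
  have hX1 : (Polynomial.X - 1 : Polynomial F).natDegree = 1 := by
    simpa using Polynomial.natDegree_X_sub_C (1 : F)
  rw [hX1, mul_one] at hdeg
  omega
end

section
/- Let F_q be a finite field and let n_1, n_2, k_1, k_2 be positive integers such that (x − 1)^{k_1} divides x^{n_1} − 1 in F_q[x] and (y − 1)^{k_2} divides y^{n_2} − 1 in F_q[y]. Let C = ⟨(x − 1)^{k_1}(y − 1)^{k_2}⟩ ⊆ F_q[x,y]/⟨x^{n_1} − 1, y^{n_2} − 1⟩, let C_x = ⟨(x − 1)^{k_1}⟩ ⊆ F_q[x]/⟨x^{n_1} − 1⟩ and C_y = ⟨(y − 1)^{k_2}⟩ ⊆ F_q[y]/⟨y^{n_2} − 1⟩. Then C is the product code C_x ⊗ C_y: writing each element of F_q[x,y]/⟨x^{n_1} − 1, y^{n_2} − 1⟩ as the class of its unique representative f = Σ_{0 ≤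 i < n_1, 0 ≤ j < n_2} f_{ij} x^i y^j, the class of f belongs to C if and only if for every j with 0 ≤ j < n_2 the polynomial Σ_{i=0}^{n_1−1} f_{ij} x^i represents an element of C_x, and for every i with 0 ≤ i < n_1 the polynomial Σ_{j=0}^{n_2−1} f_{ij} y^j represents an element of C_y. -/
open MvPolynomial

section AuxStmt5
open MvPolynomial Polynomial

theorem QUOT {A : Type*} [CommRing A] (d q p : A) (h : d ∣ q) :
    Ideal.Quotient.mk (Ideal.span {q}) p ∈ Ideal.span {Ideal.Quotient.mk (Ideal.span {q}) d} ↔ d ∣ p := by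
  rw [Ideal.mem_span_singleton]
  constructor
  · rintro ⟨z, hz⟩
    obtain ⟨c, rfl⟩ := Ideal.Quotient.mk_surjective z
    rw [← map_mul, Ideal.Quotient.eq, Ideal.mem_span_singleton] at hz
    have h1 : d ∣ p - d * c := h.trans hz
    have := dvd_add h1 (Dvd.intro c rfl)
    simpa using this
  · rintro ⟨c, rfl⟩
    exact ⟨Ideal.Quotient.mk _ c, by rw [← map_mul]⟩

theorem QUOT2 {A : Type*} [CommRing A] (I : Ideal A) (g p : A) :
    Ideal.Quotient.mk I p ∈ Ideal.span {Ideal.Quotient.mk I g} ↔ ∃ a, p - g * a ∈ I := by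
  rw [Ideal.mem_span_singleton]
  constructor
  · rintro ⟨z, hz⟩
    obtain ⟨c, rfl⟩ := Ideal.Quotient.mk_surjective z
    rw [← map_mul, Ideal.Quotient.eq] at hz
    exact ⟨c, hz⟩
  · rintro ⟨a, ha⟩
    exact ⟨Ideal.Quotient.mk _ a, by rw [← map_mul]; exact Ideal.Quotient.eq.mpr ha⟩

theorem D' {A : Type*} [CommRing A] (d : A) (g c : A[X]) (m : ℕ) (hm : 0 < m)
    (hdeg : g.degree < (m : ℕ)) (h : Polynomial.C d ∣ g - c * (Polynomial.X ^ m - 1)) :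
    Polynomial.C d ∣ g := by
  set Q := Ideal.Quotient.mk (Ideal.span ({d} : Set A)) with hQ
  have key : ∀ p : A[X], Polynomial.C d ∣ p ↔ p.map Q = 0 := by
    intro p
    rw [Polynomial.C_dvd_iff_dvd_coeff]
    constructor
    · intro hp
      ext i
      rw [Polynomial.coeff_map, Polynomial.coeff_zero, hQ, Ideal.Quotient.eq_zero_iff_dvd]
      exact hp i
    · intro hp i
      have := congrArg (fun q => q.coeff i) hp
      simp only [Polynomial.coeff_map, Polynomial.coeff_zero] at this
      rw [hQ] at this
      rwa [Ideal.Quotient.eq_zero_iff_dvd] at this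
  rw [key] at h ⊢
  rw [Polynomial.map_sub, Polynomial.map_mul, Polynomial.map_sub, Polynomial.map_pow,
    Polynomial.map_X, Polynomial.map_one, sub_eq_zero] at h
  rcases subsingleton_or_nontrivial (A ⧸ Ideal.span ({d} : Set A)) with hs | hs
  · exact Subsingleton.elim _ _
  · by_cases hc : c.map Q = 0
    · rw [h, hc, zero_mul]
    · exfalso
      have hmon : Monic ((Polynomial.X : (A ⧸ Ideal.span ({d} : Set A))[X]) ^ m - 1) := by
        have := monic_X_pow_sub_C (1 : A ⧸ Ideal.span ({d} : Set A)) hm.ne'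
        rwa [map_one] at this
      have hd2 : (g.map Q).degree < (m : ℕ) := lt_of_le_of_lt degree_map_le hdeg
      rw [h, hmon.degree_mul] at hd2
      have hdegm : ((Polynomial.X : (A ⧸ Ideal.span ({d} : Set A))[X]) ^ m - 1).degree = m := by
        have := degree_X_pow_sub_C hm (1 : A ⧸ Ideal.span ({d} : Set A))
        rwa [map_one] at this
      rw [hdegm] at hd2
      have h0 : (0 : WithBot ℕ) ≤ (c.map Q).degree := zero_le_degree_iff.mpr hc
      exact absurd hd2 (not_lt.mpr (le_add_of_nonneg_left h0))


variable {F : Type*} [CommRing F]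

noncomputable def phi (F : Type*) [CommRing F] : MvPolynomial (Fin 2) F →+* Polynomial (Polynomial F) :=
  (MvPolynomial.eval₂Hom (Polynomial.C.comp Polynomial.C) ![Polynomial.C Polynomial.X, Polynomial.X])

noncomputable def psi (F : Type*) [CommRing F] : Polynomial (Polynomial F) →+* MvPolynomial (Fin 2) F :=
  Polynomial.eval₂RingHom (Polynomial.eval₂RingHom MvPolynomial.C (MvPolynomial.X 0)) (MvPolynomial.X 1)

theorem psi_phi (a : MvPolynomial (Fin 2) F) : psi F (phi F a) = a := by
  have : (psi F).comp (phi F) = RingHom.id _ := by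
    apply MvPolynomial.ringHom_ext
    · intro r; simp [phi, psi]
    · intro i; fin_cases i <;> simp [phi, psi]
  exact RingHom.congr_fun this a

theorem phi_X0 : phi F (MvPolynomial.X 0) = Polynomial.C Polynomial.X := by simp [phi]
theorem phi_X1 : phi F (MvPolynomial.X 1) = Polynomial.X := by simp [phi]

theorem phi_g1 (k : ℕ) :
    phi F ((MvPolynomial.X 0 - 1) ^ k) = Polynomial.C ((Polynomial.X - 1) ^ k) := by
  rw [map_pow, map_sub, phi_X0, map_one, map_pow, map_sub, map_one]

theorem psi_C_g1 (k : ℕ) :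
    psi F (Polynomial.C ((Polynomial.X - 1) ^ k)) = (MvPolynomial.X 0 - 1) ^ k := by
  simp only [psi, Polynomial.coe_eval₂RingHom, Polynomial.eval₂_C]
  rw [show Polynomial.eval₂ MvPolynomial.C (MvPolynomial.X (0 : Fin 2)) ((Polynomial.X - 1 : Polynomial F) ^ k)
      = Polynomial.eval₂RingHom MvPolynomial.C (MvPolynomial.X 0) ((Polynomial.X - 1) ^ k) from rfl,
    map_pow, map_sub, map_one, Polynomial.coe_eval₂RingHom, Polynomial.eval₂_X]

theorem dvd_iff_phi (f : MvPolynomial (Fin 2) F) (k : ℕ) :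
    (MvPolynomial.X 0 - 1) ^ k ∣ f ↔ Polynomial.C ((Polynomial.X - 1) ^ k) ∣ phi F f := by
  constructor
  · intro h
    have := map_dvd (phi F) h
    rwa [phi_g1] at this
  · intro h
    have := map_dvd (psi F) h
    rwa [psi_C_g1, psi_phi] at this

theorem fin2_eq (m : Fin 2 →₀ ℕ) (i j : ℕ) :
    Finsupp.single 0 i + Finsupp.single 1 j = m ↔ m 0 = i ∧ m 1 = j := by
  constructor
  · rintro rfl
    simp [Finsupp.single_apply]
  · rintro ⟨h0, h1⟩
    ext a; fin_cases a <;> simp [Finsupp.single_apply, ← h0, ← h1]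

theorem coeff_phi (f : MvPolynomial (Fin 2) F) (i j : ℕ) :
    ((phi F f).coeff j).coeff i = MvPolynomial.coeff (Finsupp.single 0 i + Finsupp.single 1 j) f := by
  induction f using MvPolynomial.induction_on' with
  | add p q hp hq => simp [map_add, hp, hq]
  | monomial m c =>
    have h : phi F (monomial m c) = Polynomial.C (Polynomial.C c * Polynomial.X ^ (m 0)) * Polynomial.X ^ (m 1) := by
      rw [phi, eval₂Hom_monomial, Finsupp.prod_fintype]
      · simp [Fin.prod_univ_two, mul_assoc]
      · intro i; simp
    rw [h, MvPolynomial.coeff_monomial, Polynomial.coeff_mul_X_pow']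
    by_cases hj : m 1 = j
    · subst hj
      rw [if_pos le_rfl, Nat.sub_self, Polynomial.coeff_C, if_pos rfl,
        Polynomial.coeff_C_mul, Polynomial.coeff_X_pow]
      have hcond : (m = Finsupp.single 0 i + Finsupp.single 1 (m 1)) ↔ (i = m 0) := by
        rw [eq_comm, fin2_eq]; simp [eq_comm]
      by_cases him : i = m 0
      · rw [if_pos him, if_pos (hcond.mpr him), mul_one]
      · rw [if_neg him, if_neg (fun hh => him (hcond.mp hh)), mul_zero]
    · have hne : ¬ (m = Finsupp.single 0 i + Finsupp.single 1 j) :=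
        fun hh => hj ((fin2_eq m i j).mp hh.symm).2
      rw [if_neg hne]
      by_cases hle : m 1 ≤ j
      · rw [if_pos hle, Polynomial.coeff_C, if_neg (by omega), Polynomial.coeff_zero]
      · rw [if_neg hle, Polynomial.coeff_zero]


theorem coeff_vanish₀ (f : MvPolynomial (Fin 2) F) (N : ℕ) (h : degreeOf 0 f < N)
    {i : ℕ} (j : ℕ) (hi : N ≤ i) :
    MvPolynomial.coeff (Finsupp.single 0 i + Finsupp.single 1 j) f = 0 := by
  by_contra hne
  have hN : 0 < N := lt_of_le_of_lt (Nat.zero_le _) h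
  have := (MvPolynomial.degreeOf_lt_iff hN).mp h _ (MvPolynomial.mem_support_iff.mpr hne)
  simp [Finsupp.single_apply] at this
  omega

theorem coeff_vanish₁ (f : MvPolynomial (Fin 2) F) (N : ℕ) (h : degreeOf 1 f < N)
    (i : ℕ) {j : ℕ} (hj : N ≤ j) :
    MvPolynomial.coeff (Finsupp.single 0 i + Finsupp.single 1 j) f = 0 := by
  by_contra hne
  have hN : 0 < N := lt_of_le_of_lt (Nat.zero_le _) h
  have := (MvPolynomial.degreeOf_lt_iff hN).mp h _ (MvPolynomial.mem_support_iff.mpr hne)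
  simp [Finsupp.single_apply] at this
  omega

theorem coeff_phi_zero (f : MvPolynomial (Fin 2) F) (m : ℕ) (hdeg : degreeOf 1 f < m)
    {j : ℕ} (hj : m ≤ j) : (phi F f).coeff j = 0 := by
  ext i
  rw [coeff_phi, Polynomial.coeff_zero]
  exact coeff_vanish₁ f m hdeg i hj

theorem degree_phi_lt (f : MvPolynomial (Fin 2) F) (m : ℕ) (hdeg : degreeOf 1 f < m) :
    (phi F f).degree < (m : ℕ) := by
  rw [Polynomial.degree_lt_iff_coeff_zero]
  intro j hj
  exact coeff_phi_zero f m hdeg (by exact_mod_cast hj)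

theorem row_eq (f : MvPolynomial (Fin 2) F) (n₁ : ℕ) (h1 : degreeOf 0 f < n₁) (j : ℕ) :
    (phi F f).coeff j = ∑ i ∈ Finset.range n₁,
      Polynomial.C (MvPolynomial.coeff (Finsupp.single 0 i + Finsupp.single 1 j) f) * Polynomial.X ^ i := by
  ext i
  rw [coeff_phi, Polynomial.finset_sum_coeff]
  simp only [Polynomial.coeff_C_mul_X_pow]
  rw [Finset.sum_ite_eq (Finset.range n₁) i]
  by_cases hi : i < n₁
  · rw [if_pos (Finset.mem_range.mpr hi)]
  · rw [if_neg (fun hh => hi (Finset.mem_range.mp hh))]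
    exact coeff_vanish₀ f n₁ h1 j (le_of_not_gt hi)

theorem rows_iff (f : MvPolynomial (Fin 2) F) (k n₁ n₂ : ℕ)
    (h1 : degreeOf 0 f < n₁) (h2 : degreeOf 1 f < n₂) :
    (MvPolynomial.X 0 - 1) ^ k ∣ f ↔ ∀ j < n₂, ((Polynomial.X - 1) ^ k : Polynomial F) ∣
      ∑ i ∈ Finset.range n₁,
        Polynomial.C (MvPolynomial.coeff (Finsupp.single 0 i + Finsupp.single 1 j) f) * Polynomial.X ^ i := by
  rw [dvd_iff_phi, Polynomial.C_dvd_iff_dvd_coeff]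
  constructor
  · intro h j _
    rw [← row_eq f n₁ h1 j]
    exact h j
  · intro h j
    by_cases hj : j < n₂
    · rw [row_eq f n₁ h1 j]
      exact h j hj
    · rw [coeff_phi_zero f n₂ h2 (le_of_not_gt hj)]
      exact dvd_zero _

theorem dvd_of_dvd_sub (f b : MvPolynomial (Fin 2) F) (k m : ℕ) (hm : 0 < m)
    (h2 : degreeOf 1 f < m)
    (h : (MvPolynomial.X 0 - 1) ^ k ∣ f - b * (MvPolynomial.X 1 ^ m - 1)) :
    (MvPolynomial.X 0 - 1) ^ k ∣ f := by
  rw [dvd_iff_phi] at h ⊢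
  simp only [map_sub, map_mul, map_pow, map_one, phi_X1] at h
  have he : ((Polynomial.C Polynomial.X - 1 : Polynomial (Polynomial F))) ^ k
      = Polynomial.C ((Polynomial.X - 1) ^ k) := by rw [map_pow, map_sub, map_one]
  rw [he] at h
  exact D' _ _ _ m hm (degree_phi_lt f m h2) h

theorem deg_swap0 (f : MvPolynomial (Fin 2) F) :
    degreeOf 0 (rename (Equiv.swap (0 : Fin 2) 1) f) = degreeOf 1 f := by
  have := MvPolynomial.degreeOf_rename_of_injective
    (Equiv.injective (Equiv.swap (0 : Fin 2) 1)) (p := f) (1 : Fin 2)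
  rwa [Equiv.swap_apply_right] at this

theorem deg_swap1 (f : MvPolynomial (Fin 2) F) :
    degreeOf 1 (rename (Equiv.swap (0 : Fin 2) 1) f) = degreeOf 0 f := by
  have := MvPolynomial.degreeOf_rename_of_injective
    (Equiv.injective (Equiv.swap (0 : Fin 2) 1)) (p := f) (0 : Fin 2)
  rwa [Equiv.swap_apply_left] at this

theorem rename_swap_swap (g : MvPolynomial (Fin 2) F) :
    rename (Equiv.swap (0 : Fin 2) 1) (rename (Equiv.swap (0 : Fin 2) 1) g) = g := by
  rw [MvPolynomial.rename_rename]
  have h : (Equiv.swap (0 : Fin 2) 1) ∘ (Equiv.swap (0 : Fin 2) 1) = id :=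
    funext fun x => Equiv.swap_apply_self _ _ x
  rw [h, MvPolynomial.rename_id, AlgHom.id_apply]

theorem rename_swap_gen (k : ℕ) :
    rename (Equiv.swap (0 : Fin 2) 1) ((MvPolynomial.X 1 - 1 : MvPolynomial (Fin 2) F) ^ k)
      = (MvPolynomial.X 0 - 1) ^ k := by
  rw [map_pow, map_sub, map_one, rename_X, Equiv.swap_apply_right]

theorem dvd_swap (k : ℕ) (f : MvPolynomial (Fin 2) F) :
    (MvPolynomial.X 1 - 1) ^ k ∣ f ↔
      (MvPolynomial.X 0 - 1) ^ k ∣ rename (Equiv.swap (0 : Fin 2) 1) f := by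
  constructor
  · intro h
    have := map_dvd (rename (Equiv.swap (0 : Fin 2) 1)) h
    rwa [rename_swap_gen] at this
  · intro h
    have := map_dvd (rename (Equiv.swap (0 : Fin 2) 1)) h
    rwa [map_pow, map_sub, map_one, rename_X, Equiv.swap_apply_left, rename_swap_swap] at this

theorem coeff_swap (f : MvPolynomial (Fin 2) F) (i j : ℕ) :
    MvPolynomial.coeff (Finsupp.single 0 i + Finsupp.single 1 j)
        (rename (Equiv.swap (0 : Fin 2) 1) f)
      = MvPolynomial.coeff (Finsupp.single 0 j + Finsupp.single 1 i) f := by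
  have := MvPolynomial.coeff_rename_mapDomain (Equiv.swap (0 : Fin 2) 1)
    (Equiv.injective _) f (Finsupp.single 0 j + Finsupp.single 1 i)
  rw [Finsupp.mapDomain_add, Finsupp.mapDomain_single, Finsupp.mapDomain_single,
    Equiv.swap_apply_left, Equiv.swap_apply_right, add_comm] at this
  exact this

theorem columns_iff (f : MvPolynomial (Fin 2) F) (k n₁ n₂ : ℕ)
    (h1 : degreeOf 0 f < n₁) (h2 : degreeOf 1 f < n₂) :
    (MvPolynomial.X 1 - 1) ^ k ∣ f ↔ ∀ i < n₁, ((Polynomial.X - 1) ^ k : Polynomial F) ∣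
      ∑ j ∈ Finset.range n₂,
        Polynomial.C (MvPolynomial.coeff (Finsupp.single 0 i + Finsupp.single 1 j) f) * Polynomial.X ^ j := by
  rw [dvd_swap]
  rw [rows_iff (rename (Equiv.swap (0 : Fin 2) 1) f) k n₂ n₁
    (by rw [deg_swap0]; exact h2) (by rw [deg_swap1]; exact h1)]
  simp only [coeff_swap]

theorem dvd_of_dvd_sub' (f b : MvPolynomial (Fin 2) F) (k m : ℕ) (hm : 0 < m)
    (h1 : degreeOf 0 f < m)
    (h : (MvPolynomial.X 1 - 1) ^ k ∣ f - b * (MvPolynomial.X 0 ^ m - 1)) :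
    (MvPolynomial.X 1 - 1) ^ k ∣ f := by
  rw [dvd_swap] at h ⊢
  rw [map_sub, map_mul, map_sub, map_pow, rename_X, Equiv.swap_apply_left, map_one] at h
  exact dvd_of_dvd_sub _ _ k m hm (by rw [deg_swap1]; exact h1) h

theorem prime_X1_sub_one {F : Type*} [Field F] :
    Prime (MvPolynomial.X 1 - 1 : MvPolynomial (Fin 2) F) := by
  apply comap_prime (phi F) (psi F) psi_phi
  rw [map_sub, phi_X1, map_one]
  have := Polynomial.prime_X_sub_C (1 : Polynomial F)
  rwa [map_one] at this

theorem not_dvd_X1 {F : Type*} [Field F] (k : ℕ) :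
    ¬ (MvPolynomial.X 1 - 1 : MvPolynomial (Fin 2) F) ∣ (MvPolynomial.X 0 - 1) ^ k := by
  intro h
  have := map_dvd (MvPolynomial.eval (fun i : Fin 2 => if i = 0 then (0 : F) else 1)) h
  simp only [map_sub, map_pow, map_one, MvPolynomial.eval_X, if_pos rfl] at this
  rw [if_neg (by decide : ¬ (1 : Fin 2) = 0)] at this
  rw [sub_self, zero_dvd_iff] at this
  have hne : ((0 : F) - 1) ^ k ≠ 0 := pow_ne_zero _ (by simp)
  exact hne this

theorem product_dvd {F : Type*} [Field F] (f : MvPolynomial (Fin 2) F) (k₁ k₂ : ℕ)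
    (h1 : (MvPolynomial.X 0 - 1) ^ k₁ ∣ f) (h2 : (MvPolynomial.X 1 - 1) ^ k₂ ∣ f) :
    (MvPolynomial.X 0 - 1) ^ k₁ * (MvPolynomial.X 1 - 1) ^ k₂ ∣ f := by
  obtain ⟨h, rfl⟩ := h1
  have := (prime_X1_sub_one (F := F)).pow_dvd_of_dvd_mul_left k₂ (not_dvd_X1 k₁) h2
  exact mul_dvd_mul_left _ this

theorem map_univ_dvd {F : Type*} [CommRing F] (s : Fin 2) (k n : ℕ)
    (h : (Polynomial.X - 1) ^ k ∣ (Polynomial.X ^ n - 1 : Polynomial F)) :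
    (MvPolynomial.X s - 1) ^ k ∣ (MvPolynomial.X s ^ n - 1 : MvPolynomial (Fin 2) F) := by
  have := map_dvd (Polynomial.eval₂RingHom MvPolynomial.C (MvPolynomial.X s)) h
  simp only [map_pow, map_sub, map_one, Polynomial.coe_eval₂RingHom, Polynomial.eval₂_X] at this
  exact this


end AuxStmt5

/-- The two-variable monomial-like code `⟨(x−1)^{k₁}(y−1)^{k₂}⟩ ⊆ F_q[x,y]/⟨x^{n₁}−1, y^{n₂}−1⟩`
is the product code `C_x ⊗ C_y`: a (degree-bounded) representative `f` gives a codeword iff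
all its rows lie in `C_x = ⟨(x−1)^{k₁}⟩` and all its columns lie in `C_y = ⟨(y−1)^{k₂}⟩`. -/
theorem stmt_5 (F : Type) [Field F] [Fintype F]
    (n₁ n₂ k₁ k₂ : ℕ) (hn₁ : 0 < n₁) (hn₂ : 0 < n₂) (hk₁ : 0 < k₁) (hk₂ : 0 < k₂)
    (hdvd₁ : (Polynomial.X - 1) ^ k₁ ∣ (Polynomial.X ^ n₁ - 1 : Polynomial F))
    (hdvd₂ : (Polynomial.X - 1) ^ k₂ ∣ (Polynomial.X ^ n₂ - 1 : Polynomial F))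
    (I : Ideal (MvPolynomial (Fin 2) F))
    (hI : I = Ideal.span {X 0 ^ n₁ - 1, X 1 ^ n₂ - 1})
    (C : Ideal (MvPolynomial (Fin 2) F ⧸ I))
    (hC : C = Ideal.span {Ideal.Quotient.mk I ((X 0 - 1) ^ k₁ * (X 1 - 1) ^ k₂)})
    (Ix : Ideal (Polynomial F)) (hIx : Ix = Ideal.span {Polynomial.X ^ n₁ - 1})
    (Cx : Ideal (Polynomial F ⧸ Ix))
    (hCx : Cx = Ideal.span {Ideal.Quotient.mk Ix ((Polynomial.X - 1) ^ k₁)})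
    (Iy : Ideal (Polynomial F)) (hIy : Iy = Ideal.span {Polynomial.X ^ n₂ - 1})
    (Cy : Ideal (Polynomial F ⧸ Iy))
    (hCy : Cy = Ideal.span {Ideal.Quotient.mk Iy ((Polynomial.X - 1) ^ k₂)})
    (f : MvPolynomial (Fin 2) F)
    (hf₁ : degreeOf 0 f < n₁) (hf₂ : degreeOf 1 f < n₂) :
    Ideal.Quotient.mk I f ∈ C ↔
      ((∀ j < n₂, Ideal.Quotient.mk Ix
          (∑ i ∈ Finset.range n₁,
            Polynomial.C (coeff (Finsupp.single 0 i + Finsupp.single 1 j) f) *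
              Polynomial.X ^ i) ∈ Cx) ∧
       (∀ i < n₁, Ideal.Quotient.mk Iy
          (∑ j ∈ Finset.range n₂,
            Polynomial.C (coeff (Finsupp.single 0 i + Finsupp.single 1 j) f) *
              Polynomial.X ^ j) ∈ Cy)) := by

  subst hI hC hIx hCx hIy hCy
  rw [QUOT2]
  have hmx : ∀ p : Polynomial F,
      (Ideal.Quotient.mk (Ideal.span {Polynomial.X ^ n₁ - 1}) p ∈
        Ideal.span {Ideal.Quotient.mk (Ideal.span {Polynomial.X ^ n₁ - 1})
          ((Polynomial.X - 1) ^ k₁)}) ↔ (Polynomial.X - 1) ^ k₁ ∣ p :=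
    fun p => QUOT _ _ p hdvd₁
  have hmy : ∀ p : Polynomial F,
      (Ideal.Quotient.mk (Ideal.span {Polynomial.X ^ n₂ - 1}) p ∈
        Ideal.span {Ideal.Quotient.mk (Ideal.span {Polynomial.X ^ n₂ - 1})
          ((Polynomial.X - 1) ^ k₂)}) ↔ (Polynomial.X - 1) ^ k₂ ∣ p :=
    fun p => QUOT _ _ p hdvd₂
  simp only [hmx, hmy]
  rw [← rows_iff f k₁ n₁ n₂ hf₁ hf₂, ← columns_iff f k₂ n₁ n₂ hf₁ hf₂]
  constructor
  · rintro ⟨a, ha⟩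
    rw [Ideal.mem_span_pair] at ha
    obtain ⟨b₁, b₂, hb⟩ := ha
    constructor
    · apply dvd_of_dvd_sub f b₂ k₁ n₂ hn₂ hf₂
      have heq : f - b₂ * (MvPolynomial.X 1 ^ n₂ - 1)
          = (MvPolynomial.X 0 - 1) ^ k₁ * ((MvPolynomial.X 1 - 1) ^ k₂ * a)
            + b₁ * (MvPolynomial.X 0 ^ n₁ - 1) := by linear_combination -hb
      rw [heq]
      exact dvd_add (dvd_mul_right _ _) ((map_univ_dvd 0 k₁ n₁ hdvd₁).mul_left b₁)
    · apply dvd_of_dvd_sub' f b₁ k₂ n₁ hn₁ hf₁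
      have heq : f - b₁ * (MvPolynomial.X 0 ^ n₁ - 1)
          = (MvPolynomial.X 1 - 1) ^ k₂ * ((MvPolynomial.X 0 - 1) ^ k₁ * a)
            + b₂ * (MvPolynomial.X 1 ^ n₂ - 1) := by linear_combination -hb
      rw [heq]
      exact dvd_add (dvd_mul_right _ _) ((map_univ_dvd 1 k₂ n₂ hdvd₂).mul_left b₂)
  · rintro ⟨hx, hy⟩
    obtain ⟨c, hc⟩ := product_dvd f k₁ k₂ hx hy
    exact ⟨c, by rw [hc, sub_self]; exact Ideal.zero_mem _⟩
end

section
/- Let p be a prime, F_q a finite field of characteristic p, s_1,…,s_n positive integers, and N_1,…,N_n integers with 0 ≤ N_j ≤ p^{s_j} for all j. Let C = ⟨(x_1 − 1)^{N_1}···(x_n − 1)^{N_n}⟩ ⊆ R = F_q[x_1,…,x_n]/⟨x_1^{p^{s_1}} − 1, …, x_n^{p^{s_n}} − 1⟩. Then the Euclidean dual code of C is C^⊥ = ⟨(x_1 − 1)^{p^{s_1} − N_1}, …, (x_n − 1)^{p^{s_n} − N_n}⟩. -/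
open MvPolynomial

namespace Stmt8Aux

variable {F : Type} [Field F] {n : ℕ}

noncomputable def eps (w : (Fin n →₀ ℕ) → F) : MvPolynomial (Fin n) F →ₗ[F] F where
  toFun h := Finsupp.sum (AddMonoidAlgebra.coeff h) fun m c => c * w m
  map_add' h1 h2 :=
    Finsupp.sum_add_index' (fun m => zero_mul _) (fun m c1 c2 => add_mul _ _ _)
  map_smul' c h := by
    classical
    show (Finsupp.sum (AddMonoidAlgebra.coeff (c • h)) fun m x => x * w m) = c • Finsupp.sum (AddMonoidAlgebra.coeff h) fun m x => x * w m
    rw [AddMonoidAlgebra.coeff_smul, Finsupp.sum_of_support_subset (c • AddMonoidAlgebra.coeff h) Finsupp.support_smul (fun m x => x * w m) (fun m _ => zero_mul _),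
      Finsupp.sum, Finset.smul_sum]
    refine Finset.sum_congr rfl fun m _ => ?_
    rw [Finsupp.smul_apply, smul_eq_mul, smul_eq_mul, mul_assoc]

theorem eps_apply (w : (Fin n →₀ ℕ) → F) (h : MvPolynomial (Fin n) F) :
    eps w h = ∑ m ∈ h.support, coeff m h * w m := rfl

@[simp] theorem eps_monomial (w : (Fin n →₀ ℕ) → F) (m : Fin n →₀ ℕ) (c : F) :
    eps w (monomial m c) = c * w m := by
  classical
  rw [eps_apply]
  by_cases hc : c = 0
  · simp [hc]
  · rw [support_monomial, if_neg hc, Finset.sum_singleton, coeff_monomial, if_pos rfl]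

theorem eps_mul_monomial (w : (Fin n →₀ ℕ) → F) (a : Fin n →₀ ℕ)
    (t : MvPolynomial (Fin n) F) :
    eps w (monomial a 1 * t) = eps (fun m => w (a + m)) t := by
  induction t using MvPolynomial.induction_on' with
  | monomial m c =>
      rw [monomial_mul, one_mul, eps_monomial, eps_monomial]
  | add pp qq hp hq => rw [mul_add, map_add, map_add, hp, hq]


theorem eps_mul_mem_span (q : Fin n → ℕ) (w : (Fin n →₀ ℕ) → F)
    (hw : ∀ (m : Fin n →₀ ℕ) (j : Fin n), w (m + Finsupp.single j (q j)) = w m)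
    {u : MvPolynomial (Fin n) F}
    (hu : u ∈ Ideal.span (Set.range fun j : Fin n => (X j : MvPolynomial (Fin n) F) ^ q j - 1))
    (t : MvPolynomial (Fin n) F) : eps w (t * u) = 0 := by
  revert t
  refine Submodule.span_induction (p := fun u _ => ∀ t, eps w (t * u) = 0)
    ?_ ?_ ?_ ?_ hu
  · rintro x ⟨j, rfl⟩ t
    have hx : t * ((X j : MvPolynomial (Fin n) F) ^ q j - 1)
        = monomial (Finsupp.single j (q j)) 1 * t - t := by
      rw [X_pow_eq_monomial]; ring
    rw [hx, map_sub, eps_mul_monomial]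
    have hww : (fun m => w (Finsupp.single j (q j) + m)) = w := by
      funext m; rw [add_comm]; exact hw m j
    rw [hww, sub_self]
  · intro t; rw [mul_zero, map_zero]
  · rintro x y _ _ hx hy t; rw [mul_add, map_add, hx, hy, add_zero]
  · rintro a x _ hx t
    have : t * (a • x) = (t * a) * x := by rw [smul_eq_mul]; ring
    rw [this, hx]

theorem eps_mem_span (q : Fin n → ℕ) (w : (Fin n →₀ ℕ) → F)
    (hw : ∀ (m : Fin n →₀ ℕ) (j : Fin n), w (m + Finsupp.single j (q j)) = w m)
    {u : MvPolynomial (Fin n) F}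
    (hu : u ∈ Ideal.span (Set.range fun j : Fin n => (X j : MvPolynomial (Fin n) F) ^ q j - 1)) :
    eps w u = 0 := by
  have := eps_mul_mem_span q w hw hu 1; rwa [one_mul] at this

/-- the weight `k ↦ [∀ j, q j ∣ k j + a j]`. -/
noncomputable def W (q : Fin n → ℕ) (a : Fin n →₀ ℕ) : (Fin n →₀ ℕ) → F :=
  fun k => if ∀ j, q j ∣ (k j + a j) then 1 else 0

theorem W_def (q : Fin n → ℕ) (a k : Fin n →₀ ℕ) :
    W (F := F) q a k = if ∀ j, q j ∣ (k j + a j) then 1 else 0 := rfl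

theorem W_periodic (q : Fin n → ℕ) (a : Fin n →₀ ℕ) (m : Fin n →₀ ℕ) (j : Fin n) :
    W (F := F) q a (m + Finsupp.single j (q j)) = W q a m := by
  unfold W
  congr 1
  simp only [eq_iff_iff]
  apply forall_congr'
  intro j'
  rcases eq_or_ne j' j with rfl | hne
  · rw [Finsupp.add_apply, Finsupp.single_eq_same]
    constructor
    · intro hdvd
      have : m j' + q j' + a j' = m j' + a j' + q j' := by ring
      rw [this, Nat.dvd_add_self_right] at hdvd; exact hdvd
    · intro hdvd
      have : m j' + q j' + a j' = m j' + a j' + q j' := by ring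
      rw [this, Nat.dvd_add_self_right]; exact hdvd
  · rw [Finsupp.add_apply, Finsupp.single_eq_of_ne' (by exact fun hh => hne hh.symm), add_zero]

noncomputable def mstar (q : Fin n → ℕ) (r : Fin n →₀ ℕ) : Fin n →₀ ℕ :=
  Finsupp.equivFunOnFinite.symm fun j => (q j - r j) % q j

@[simp] theorem mstar_apply (q : Fin n → ℕ) (r : Fin n →₀ ℕ) (j : Fin n) :
    mstar q r j = (q j - r j) % q j := rfl

theorem natL4 (q k r : ℕ) (hq : 0 < q) (hk : k < q) (hr : r < q) :
    q ∣ k + (q - r) % q ↔ k = r := by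
  rcases Nat.eq_zero_or_pos r with h0 | hpos
  · subst h0
    rw [Nat.sub_zero, Nat.mod_self, Nat.add_zero]
    constructor
    · intro h; exact Nat.eq_zero_of_dvd_of_lt h hk
    · rintro rfl; exact dvd_zero q
  · have hmod : (q - r) % q = q - r := Nat.mod_eq_of_lt (by omega)
    rw [hmod]
    constructor
    · rintro ⟨c, hc⟩
      have hlt : q * c < q * 2 := by
        calc q * c = k + (q - r) := hc.symm
        _ < q * 2 := by omega
      have hc2 : c < 2 := Nat.lt_of_mul_lt_mul_left hlt
      have hne : c ≠ 0 := by rintro rfl; rw [Nat.mul_zero] at hc; omega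
      have hc1 : c = 1 := by omega
      subst hc1; rw [Nat.mul_one] at hc; omega
    · rintro rfl; exact ⟨1, by omega⟩

theorem W_eval_box (q : Fin n → ℕ) (hq : ∀ j, 0 < q j) (r k : Fin n →₀ ℕ)
    (hr : ∀ j, r j < q j) (hk : ∀ j, k j < q j) :
    W (F := F) q (mstar q r) k = if k = r then 1 else 0 := by
  unfold W
  congr 1
  simp only [eq_iff_iff]
  constructor
  · intro hall
    ext j
    have := hall j
    rw [mstar_apply] at this
    exact (natL4 (q j) (k j) (r j) (hq j) (hk j) (hr j)).mp this
  · rintro rfl j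
    rw [mstar_apply]
    exact (natL4 (q j) (k j) (k j) (hq j) (hk j) (hr j)).mpr rfl

theorem eps_W_reduced (q : Fin n → ℕ) (hq : ∀ j, 0 < q j) (r : Fin n →₀ ℕ)
    (u : MvPolynomial (Fin n) F) (hr : ∀ j, r j < q j)
    (hu : ∀ m ∈ u.support, ∀ j, m j < q j) :
    eps (W q (mstar q r)) u = coeff r u := by
  classical
  rw [eps_apply]
  rw [Finset.sum_congr rfl (fun m hm => by
    rw [W_eval_box q hq r m hr (hu m hm)])]
  rw [show (∑ m ∈ u.support, coeff m u * if m = r then (1:F) else 0)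
      = ∑ m ∈ u.support, if m = r then coeff m u else 0 from
    Finset.sum_congr rfl fun m _ => by split <;> simp]
  rw [Finset.sum_ite_eq' u.support r (fun m => coeff m u)]
  by_cases h : r ∈ u.support
  · rw [if_pos h]
  · rw [if_neg h, MvPolynomial.notMem_support_iff.mp h]


/-- monomial ideal membership -/
theorem mem_span_X_pow_iff (e : Fin n → ℕ) (h : MvPolynomial (Fin n) F) :
    h ∈ Ideal.span (Set.range fun j : Fin n => (X j : MvPolynomial (Fin n) F) ^ e j)
      ↔ ∀ m ∈ h.support, ∃ j, e j ≤ m j := by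
  classical
  constructor
  · intro hmem
    let V : Ideal (MvPolynomial (Fin n) F) :=
      { carrier := {h | ∀ m ∈ h.support, ∃ j, e j ≤ m j}
        zero_mem' := by intro m hm; simp at hm
        add_mem' := by
          intro a b ha hb m hm
          rcases Finset.mem_union.mp (MvPolynomial.support_add hm) with h' | h'
          · exact ha m h'
          · exact hb m h'
        smul_mem' := by
          intro t h hh m hm
          rw [smul_eq_mul] at hm
          have := MvPolynomial.support_mul t h hm
          rcases Finset.mem_add.mp this with ⟨a, ha, b, hb, rfl⟩
          obtain ⟨j, hj⟩ := hh b hb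
          exact ⟨j, le_trans hj (by simp [Finsupp.add_apply])⟩ }
    have hle : Ideal.span (Set.range fun j : Fin n => (X j : MvPolynomial (Fin n) F) ^ e j) ≤ V := by
      rw [Ideal.span_le]
      rintro x ⟨j, rfl⟩ m hm
      change m ∈ ((X j : MvPolynomial (Fin n) F) ^ e j).support at hm
      rw [X_pow_eq_monomial, support_monomial, if_neg (one_ne_zero)] at hm
      rw [Finset.mem_singleton.mp hm]
      exact ⟨j, by simp⟩
    exact hle hmem
  · intro hcond
    rw [h.as_sum]
    apply Ideal.sum_mem
    intro m hm
    obtain ⟨j, hj⟩ := hcond m hm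
    have hsub : (m - Finsupp.single j (e j)) + Finsupp.single j (e j) = m := by
      ext k
      rcases eq_or_ne k j with rfl | hne
      · simp only [Finsupp.add_apply, Finsupp.tsub_apply, Finsupp.single_eq_same]
        omega
      · simp [Finsupp.add_apply, Finsupp.tsub_apply, Finsupp.single_eq_of_ne' (Ne.symm hne)]
    have key : (monomial m (coeff m h) : MvPolynomial (Fin n) F)
        = monomial (m - Finsupp.single j (e j)) (coeff m h) * (X j) ^ e j := by
      rw [X_pow_eq_monomial, monomial_mul, mul_one, hsub]
    rw [key]
    exact Ideal.mul_mem_left _ _ (Ideal.subset_span ⟨j, rfl⟩)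

section Q
variable (q : Fin n → ℕ)

/-- the defining ideal -/
noncomputable def Igen : Ideal (MvPolynomial (Fin n) F) :=
  Ideal.span (Set.range fun j : Fin n => (X j : MvPolynomial (Fin n) F) ^ q j - 1)

theorem mk_X_pow_q (j : Fin n) :
    Ideal.Quotient.mk (Igen (F := F) q) ((X j) ^ q j) = 1 := by
  rw [show (1 : MvPolynomial (Fin n) F ⧸ Igen (F := F) q)
      = Ideal.Quotient.mk (Igen (F := F) q) 1 from rfl, Ideal.Quotient.eq]
  exact Ideal.subset_span ⟨j, rfl⟩

theorem mk_X_pow_mod (j : Fin n) (a : ℕ) :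
    Ideal.Quotient.mk (Igen (F := F) q) ((X j) ^ a)
      = Ideal.Quotient.mk (Igen (F := F) q) ((X j) ^ (a % q j)) := by
  conv_lhs => rw [← Nat.div_add_mod a (q j)]
  rw [pow_add, pow_mul, map_mul, map_pow, mk_X_pow_q, one_pow, one_mul]

theorem mk_X_pow_congr (j : Fin n) (a b : ℕ) (hab : a % q j = b % q j) :
    Ideal.Quotient.mk (Igen (F := F) q) ((X j) ^ a)
      = Ideal.Quotient.mk (Igen (F := F) q) ((X j) ^ b) := by
  rw [mk_X_pow_mod, hab, ← mk_X_pow_mod]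

theorem monomial_eq_prod (m : Fin n →₀ ℕ) (c : F) :
    (monomial m c : MvPolynomial (Fin n) F) = C c * ∏ j : Fin n, (X j) ^ m j := by
  rw [monomial_eq]
  congr 1
  exact Finsupp.prod_fintype m (fun j e => (X j : MvPolynomial (Fin n) F) ^ e)
    (fun j => pow_zero _)

/-- exponent reduction mod q -/
noncomputable def rmod (m : Fin n →₀ ℕ) : Fin n →₀ ℕ :=
  Finsupp.equivFunOnFinite.symm fun j => m j % q j

@[simp] theorem rmod_apply (m : Fin n →₀ ℕ) (j : Fin n) : rmod q m j = m j % q j := rfl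

theorem mk_monomial_mod (m : Fin n →₀ ℕ) (c : F) :
    Ideal.Quotient.mk (Igen (F := F) q) (monomial m c)
      = Ideal.Quotient.mk (Igen (F := F) q) (monomial (rmod q m) c) := by
  rw [monomial_eq_prod, monomial_eq_prod, map_mul, map_mul, map_prod, map_prod]
  congr 1
  apply Finset.prod_congr rfl
  intro j _
  rw [map_pow, map_pow, ← map_pow, ← map_pow]
  exact mk_X_pow_congr q j (m j) (rmod q m j)
    (by rw [rmod_apply, Nat.mod_mod_of_dvd _ (dvd_refl (q j))])

noncomputable def red : MvPolynomial (Fin n) F →ₗ[F] MvPolynomial (Fin n) F where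
  toFun h := Finsupp.sum (AddMonoidAlgebra.coeff h) fun m c => monomial (rmod q m) c
  map_add' h1 h2 :=
    Finsupp.sum_add_index' (fun m => by rw [map_zero]) (fun m c1 c2 => by rw [map_add])
  map_smul' c h := by
    classical
    rw [RingHom.id_apply]
    show (Finsupp.sum (AddMonoidAlgebra.coeff (c • h)) fun m x => (monomial (rmod q m)) x)
      = c • Finsupp.sum (AddMonoidAlgebra.coeff h) fun m x => (monomial (rmod q m)) x
    rw [AddMonoidAlgebra.coeff_smul, Finsupp.sum_of_support_subset (c • AddMonoidAlgebra.coeff h) Finsupp.support_smul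
      (fun m x => monomial (rmod q m) x) (fun m _ => by simp),
      Finsupp.sum, Finset.smul_sum]
    refine Finset.sum_congr rfl fun m _ => ?_
    rw [Finsupp.smul_apply, smul_eq_mul, ← map_smul (monomial (rmod q m)), smul_eq_mul]

theorem red_monomial (m : Fin n →₀ ℕ) (c : F) :
    red q (monomial m c) = monomial (rmod q m) c := by
  show Finsupp.sum (Finsupp.single m c) (fun m c => (monomial (rmod q m)) c) = _
  exact Finsupp.sum_single_index (by rw [map_zero])

theorem red_reduced (hq : ∀ j, 0 < q j) (h : MvPolynomial (Fin n) F) :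
    ∀ k ∈ (red (F := F) q h).support, ∀ j, k j < q j := by
  induction h using MvPolynomial.induction_on' with
  | monomial m c =>
      intro k hk j
      rw [red_monomial, MvPolynomial.mem_support_iff, MvPolynomial.coeff_monomial] at hk
      by_cases hkm : rmod q m = k
      · rw [← hkm, rmod_apply]
        exact Nat.mod_lt _ (hq j)
      · rw [if_neg hkm] at hk
        exact absurd rfl hk
  | add a b ha hb =>
      intro k hk j
      rw [map_add] at hk
      rcases Finset.mem_union.mp (MvPolynomial.support_add hk) with h' | h'
      · exact ha k h' j
      · exact hb k h' j

theorem red_mk (h : MvPolynomial (Fin n) F) :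
    Ideal.Quotient.mk (Igen (F := F) q) (red q h)
      = Ideal.Quotient.mk (Igen (F := F) q) h := by
  induction h using MvPolynomial.induction_on' with
  | monomial m c => rw [red_monomial, ← mk_monomial_mod]
  | add a b ha hb =>
      rw [map_add (red q) a b, RingHom.map_add, RingHom.map_add, ha, hb]

theorem Igen_def :
    Igen (F := F) q
      = Ideal.span (Set.range fun j : Fin n => (X j : MvPolynomial (Fin n) F) ^ q j - 1) := rfl

end Q


/-- shift automorphism `X j ↦ X j + 1` -/
noncomputable def sigE : MvPolynomial (Fin n) F ≃ₐ[F] MvPolynomial (Fin n) F :=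
  AlgEquiv.ofAlgHom (aeval fun j => X j + 1) (aeval fun j => X j - 1)
    (by apply MvPolynomial.algHom_ext; intro j; simp)
    (by apply MvPolynomial.algHom_ext; intro j; simp)

theorem sigE_X (j : Fin n) : sigE (X j : MvPolynomial (Fin n) F) = X j + 1 := by
  simp [sigE, AlgEquiv.ofAlgHom]

theorem mem_span_iff_sig (S : Set (MvPolynomial (Fin n) F)) (h : MvPolynomial (Fin n) F) :
    h ∈ Ideal.span S ↔ sigE h ∈ Ideal.span (⇑(sigE (F := F) (n := n)) '' S) := by
  rw [← Ideal.map_span (sigE (F := F) (n := n))]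
  constructor
  · intro hh
    exact Ideal.mem_map_of_mem _ hh
  · intro hh
    obtain ⟨x, hx, hxe⟩ := (Ideal.mem_map_iff_of_surjective _
      (sigE (F := F) (n := n)).surjective).mp hh
    have : x = h := sigE.injective (by exact hxe)
    rwa [← this]

theorem sigE_pow_char_sub_one (p : ℕ) [Fact p.Prime] [CharP F p] (k : ℕ) (j : Fin n) :
    sigE ((X j : MvPolynomial (Fin n) F) ^ p ^ k - 1) = X j ^ p ^ k := by
  rw [map_sub, map_pow, map_one, sigE_X, add_pow_char_pow]
  simp

theorem sigE_sub_one_pow (c : ℕ) (j : Fin n) :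
    sigE (((X j : MvPolynomial (Fin n) F) - 1) ^ c) = X j ^ c := by
  rw [map_pow, map_sub, map_one, sigE_X]
  ring_nf


section Q
variable (q : Fin n → ℕ)

noncomputable def qhat : Fin n →₀ ℕ := Finsupp.equivFunOnFinite.symm q

@[simp] theorem qhat_apply (j : Fin n) : qhat q j = q j := rfl

noncomputable def starP (h : MvPolynomial (Fin n) F) : MvPolynomial (Fin n) F :=
  AddMonoidAlgebra.ofCoeff (Finsupp.mapDomain (fun m => qhat q - m) (AddMonoidAlgebra.coeff h))

theorem starP_def (h : MvPolynomial (Fin n) F) :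
    starP (F := F) q h = AddMonoidAlgebra.ofCoeff (Finsupp.mapDomain (fun m => qhat q - m) (AddMonoidAlgebra.coeff h)) := rfl

theorem starP_monomial (m : Fin n →₀ ℕ) (c : F) :
    starP (F := F) q (monomial m c) = monomial (qhat q - m) c :=
  congrArg AddMonoidAlgebra.ofCoeff Finsupp.mapDomain_single

theorem starP_support (h : MvPolynomial (Fin n) F) :
    ∀ k ∈ (starP (F := F) q h).support, ∀ j, k j ≤ q j := by
  classical
  intro k hk j
  have := Finsupp.mapDomain_support (f := fun m => qhat q - m) (s := AddMonoidAlgebra.coeff h) hk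
  rcases Finset.mem_image.mp this with ⟨m, _, rfl⟩
  rw [Finsupp.tsub_apply, qhat_apply]
  omega

theorem starP_starP (h : MvPolynomial (Fin n) F)
    (hh : ∀ m ∈ h.support, ∀ j, m j ≤ q j) : starP (F := F) q (starP q h) = h := by
  rw [starP, starP, AddMonoidAlgebra.coeff_ofCoeff, ← Finsupp.mapDomain_comp]
  rw [Finsupp.mapDomain_congr (g := id) (fun m hm => by
    show qhat q - (qhat q - m) = m
    ext j
    have := hh m hm j
    simp only [Finsupp.tsub_apply, qhat_apply]
    omega)]
  rw [Finsupp.mapDomain_id]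

/-- the inversion substitution `X j ↦ X j ^ (q j - 1)` -/
noncomputable def stH : MvPolynomial (Fin n) F →ₐ[F] MvPolynomial (Fin n) F :=
  aeval fun j => X j ^ (q j - 1)

theorem stH_X (j : Fin n) : stH (F := F) q (X j) = X j ^ (q j - 1) := aeval_X _ _

theorem stH_mem (u : MvPolynomial (Fin n) F) (hu : u ∈ Igen (F := F) q) :
    stH q u ∈ Igen (F := F) q := by
  have hgen : ∀ j : Fin n, stH (F := F) q ((X j) ^ q j - 1) ∈ Igen (F := F) q := by
    intro j
    rw [map_sub, map_pow, map_one, stH_X, ← pow_mul]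
    rw [← Ideal.Quotient.eq_zero_iff_mem, map_sub, map_one]
    rw [mk_X_pow_congr q j ((q j - 1) * (q j)) 0 (by rw [Nat.mul_mod_left, Nat.zero_mod])]
    rw [pow_zero, map_one, sub_self]
  have hmem : stH (F := F) q u ∈ Ideal.map (stH (F := F) q) (Igen (F := F) q) :=
    Ideal.mem_map_of_mem _ hu
  have hle : Ideal.map (stH (F := F) q) (Igen (F := F) q) ≤ Igen (F := F) q := by
    conv_lhs => rw [Igen_def]
    rw [Ideal.map_span, Ideal.span_le]
    rintro x ⟨y, ⟨j, rfl⟩, rfl⟩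
    exact hgen j
  exact hle hmem

theorem mk_X_mul_inv (hq : ∀ j, 0 < q j) (j : Fin n) :
    Ideal.Quotient.mk (Igen (F := F) q) (X j)
      * Ideal.Quotient.mk (Igen (F := F) q) (X j ^ (q j - 1)) = 1 := by
  rw [← map_mul, ← pow_succ']
  rw [show q j - 1 + 1 = q j by have := hq j; omega]
  exact mk_X_pow_q q j

theorem mk_st_pow (hq : ∀ j, 0 < q j) (j : Fin n) (m : ℕ) (hm : m ≤ q j) :
    Ideal.Quotient.mk (Igen (F := F) q) ((X j ^ (q j - 1)) ^ m)
      = Ideal.Quotient.mk (Igen (F := F) q) (X j ^ (q j - m)) := by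
  set mk := Ideal.Quotient.mk (Igen (F := F) q)
  have h1 : mk ((X j ^ (q j - 1)) ^ m) * mk (X j ^ m) = 1 := by
    rw [← pow_mul, ← map_mul, ← pow_add]
    rw [show (q j - 1) * m + m = q j * m by
      rw [Nat.sub_one_mul]
      have : m ≤ q j * m := Nat.le_mul_of_pos_left m (hq j)
      omega]
    rw [pow_mul, map_pow, mk_X_pow_q, one_pow]
  have h2 : mk (X j ^ (q j - m)) * mk (X j ^ m) = 1 := by
    rw [← map_mul, ← pow_add, Nat.sub_add_cancel hm]
    exact mk_X_pow_q q j
  calc mk ((X j ^ (q j - 1)) ^ m)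
      = mk ((X j ^ (q j - 1)) ^ m) * (mk (X j ^ (q j - m)) * mk (X j ^ m)) := by
        rw [h2, mul_one]
    _ = mk (X j ^ (q j - m)) * (mk ((X j ^ (q j - 1)) ^ m) * mk (X j ^ m)) := by ring
    _ = mk (X j ^ (q j - m)) := by rw [h1, mul_one]

theorem mk_stH_eq_starP (hq : ∀ j, 0 < q j) (g : MvPolynomial (Fin n) F)
    (hg : ∀ m ∈ g.support, ∀ j, m j ≤ q j) :
    Ideal.Quotient.mk (Igen (F := F) q) (stH q g)
      = Ideal.Quotient.mk (Igen (F := F) q) (starP q g) := by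
  conv_lhs => rw [g.as_sum]
  conv_rhs => rw [g.as_sum]
  rw [show starP (F := F) q (∑ m ∈ g.support, monomial m (coeff m g))
      = ∑ m ∈ g.support, starP (F := F) q (monomial m (coeff m g)) from
    AddMonoidAlgebra.coeff_injective (by
      simp only [starP_def, AddMonoidAlgebra.coeff_sum, AddMonoidAlgebra.coeff_ofCoeff,
        Finsupp.mapDomain_finset_sum])]
  rw [map_sum, map_sum, map_sum]
  apply Finset.sum_congr rfl
  intro m hm
  rw [starP_monomial, monomial_eq_prod, monomial_eq_prod, map_mul, map_mul, map_mul,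
    map_prod, map_prod, map_prod]
  congr 1
  · rw [show (stH (F := F) q) (C (coeff m g)) = C (coeff m g) by
      rw [stH, aeval_C, algebraMap_eq]]
  · apply Finset.prod_congr rfl
    intro j _
    have hqm : (qhat q - m) j = q j - m j := by rw [Finsupp.tsub_apply, qhat_apply]
    rw [hqm, map_pow, stH_X]
    exact mk_st_pow q hq j (m j) (hg m hm j)

end Q

section Q
variable (q : Fin n → ℕ)

theorem star_mem_of (hq : ∀ j, 0 < q j) (Nv : Fin n → ℕ) (g : MvPolynomial (Fin n) F)
    (hg : ∀ m ∈ g.support, ∀ j, m j ≤ q j)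
    (h : (∏ j : Fin n, ((X j : MvPolynomial (Fin n) F) - 1) ^ Nv j) * g ∈ Igen (F := F) q) :
    (∏ j : Fin n, ((X j : MvPolynomial (Fin n) F) - 1) ^ Nv j) * starP q g
      ∈ Igen (F := F) q := by
  classical
  set mkq := Ideal.Quotient.mk (Igen (F := F) q) with hmk
  have h1 : mkq (stH q ((∏ j : Fin n, ((X j : MvPolynomial (Fin n) F) - 1) ^ Nv j) * g)) = 0 :=
    Ideal.Quotient.eq_zero_iff_mem.mpr (stH_mem q _ h)
  rw [← Ideal.Quotient.eq_zero_iff_mem]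
  have hsub : ∀ j : Fin n, mkq ((X j) ^ (q j - 1) - 1)
      = -(mkq ((X j) ^ (q j - 1)) * mkq ((X j) - 1)) := by
    intro j
    have hx : (X j : MvPolynomial (Fin n) F) ^ (q j - 1) * X j = X j ^ q j := by
      rw [← pow_succ]
      congr 1
      have := hq j; omega
    have key : ((X j : MvPolynomial (Fin n) F) ^ (q j - 1) - 1)
        + X j ^ (q j - 1) * (X j - 1) = X j ^ q j - 1 := by
      linear_combination hx
    have h0 : mkq ((X j : MvPolynomial (Fin n) F) ^ q j - 1) = 0 := by
      rw [hmk, Ideal.Quotient.eq_zero_iff_mem, Igen_def]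
      exact Ideal.subset_span ⟨j, rfl⟩
    have hk := congrArg mkq key
    rw [RingHom.map_add, h0, RingHom.map_mul] at hk
    exact eq_neg_of_add_eq_zero_left hk
  have hstyn : stH (F := F) q (∏ j : Fin n, ((X j : MvPolynomial (Fin n) F) - 1) ^ Nv j)
      = ∏ j : Fin n, ((X j : MvPolynomial (Fin n) F) ^ (q j - 1) - 1) ^ Nv j := by
    rw [map_prod]
    apply Finset.prod_congr rfl
    intro j _
    rw [map_pow, map_sub, map_one, stH_X]
  have step : (∏ j : Fin n, (-(mkq (X j))) ^ Nv j)
        * ∏ j : Fin n, (mkq ((X j) ^ (q j - 1) - 1)) ^ Nv j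
      = ∏ j : Fin n, (mkq ((X j) - 1)) ^ Nv j := by
    rw [← Finset.prod_mul_distrib]
    apply Finset.prod_congr rfl
    intro j _
    rw [hsub j, ← mul_pow]
    congr 1
    calc -mkq (X j) * -(mkq (X j ^ (q j - 1)) * mkq (X j - 1))
        = mkq (X j) * mkq (X j ^ (q j - 1)) * mkq (X j - 1) := by ring
      _ = mkq (X j - 1) := by rw [mk_X_mul_inv q hq j, one_mul]
  calc mkq ((∏ j : Fin n, ((X j : MvPolynomial (Fin n) F) - 1) ^ Nv j) * starP q g)
      = (∏ j : Fin n, (mkq ((X j) - 1)) ^ Nv j) * mkq (starP q g) := by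
        rw [RingHom.map_mul]
        congr 1
        rw [map_prod mkq (fun j : Fin n => ((X j : MvPolynomial (Fin n) F) - 1) ^ Nv j)
          Finset.univ]
        apply Finset.prod_congr rfl
        intro j _
        rw [RingHom.map_pow]
    _ = (∏ j : Fin n, (-(mkq (X j))) ^ Nv j)
          * mkq (stH q ((∏ j : Fin n, ((X j : MvPolynomial (Fin n) F) - 1) ^ Nv j) * g)) := by
        rw [map_mul (stH q), RingHom.map_mul, hstyn, ← mk_stH_eq_starP q hq g hg]
        rw [map_prod mkq
          (fun j : Fin n => ((X j : MvPolynomial (Fin n) F) ^ (q j - 1) - 1) ^ Nv j)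
          Finset.univ]
        rw [show (∏ j : Fin n, mkq (((X j : MvPolynomial (Fin n) F) ^ (q j - 1) - 1) ^ Nv j))
            = ∏ j : Fin n, (mkq ((X j) ^ (q j - 1) - 1)) ^ Nv j from
          Finset.prod_congr rfl fun j _ => by rw [RingHom.map_pow]]
        rw [← mul_assoc, step]
    _ = 0 := by rw [h1, mul_zero]

theorem star_mem_iff (hq : ∀ j, 0 < q j) (Nv : Fin n → ℕ) (g : MvPolynomial (Fin n) F)
    (hg : ∀ m ∈ g.support, ∀ j, m j ≤ q j) :
    (∏ j : Fin n, ((X j : MvPolynomial (Fin n) F) - 1) ^ Nv j) * g ∈ Igen (F := F) q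
    ↔ (∏ j : Fin n, ((X j : MvPolynomial (Fin n) F) - 1) ^ Nv j) * starP q g
        ∈ Igen (F := F) q := by
  constructor
  · exact star_mem_of q hq Nv g hg
  · intro h
    have := star_mem_of q hq Nv (starP q g) (starP_support q g) h
    rwa [starP_starP q g hg] at this

end Q

section Q
variable (q : Fin n → ℕ)

theorem W_shift (a : Fin n →₀ ℕ) :
    (fun k => W (F := F) q 0 (a + k)) = W (F := F) q a := by
  funext k
  rw [W_def, W_def]
  congr 1
  simp only [eq_iff_iff]
  apply forall_congr'
  intro j
  rw [Finsupp.add_apply, Finsupp.coe_zero, Pi.zero_apply, add_zero, add_comm (a j) (k j)]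

theorem eps_starP (w : (Fin n →₀ ℕ) → F) (g : MvPolynomial (Fin n) F) :
    eps w (starP q g) = ∑ m ∈ g.support, coeff m g * w (qhat q - m) := by
  rw [starP_def]
  have : eps (F := F) w (AddMonoidAlgebra.ofCoeff (Finsupp.mapDomain (fun m => qhat q - m) (AddMonoidAlgebra.coeff g)))
      = Finsupp.sum (Finsupp.mapDomain (fun m => qhat q - m) (AddMonoidAlgebra.coeff g)) fun k c => c * w k := by
    rfl
  rw [this, Finsupp.sum_mapDomain_index (h := fun k c => c * w k) (fun b => zero_mul _)
    (fun b c1 c2 => add_mul _ _ _)]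
  rfl

theorem natL5 (q' k r : ℕ) (hq : 0 < q') (hk : k < q') (hr : r < q') :
    q' ∣ k + (q' - r) ↔ k = r := by
  constructor
  · rintro ⟨c, hc⟩
    have hlt : q' * c < q' * 2 := by
      calc q' * c = k + (q' - r) := hc.symm
      _ < q' * 2 := by omega
    have hc2 : c < 2 := Nat.lt_of_mul_lt_mul_left hlt
    have hne : c ≠ 0 := by rintro rfl; rw [Nat.mul_zero] at hc; omega
    have hc1 : c = 1 := by omega
    subst hc1; rw [Nat.mul_one] at hc; omega
  · rintro rfl; exact ⟨1, by omega⟩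

/-- the pairing lemma -/
theorem pairing (hq : ∀ j, 0 < q j) (f g : MvPolynomial (Fin n) F)
    (hf : ∀ m ∈ f.support, ∀ j, m j < q j) (hg : ∀ m ∈ g.support, ∀ j, m j < q j) :
    ∑ m ∈ f.support, coeff m f * coeff m g = eps (W q 0) (f * starP q g) := by
  classical
  conv_rhs => rw [f.as_sum, Finset.sum_mul, map_sum]
  apply Finset.sum_congr rfl
  intro m hm
  have hm1 : (monomial m (coeff m f) : MvPolynomial (Fin n) F)
      = coeff m f • monomial m 1 := by
    rw [← map_smul (monomial m), smul_eq_mul, mul_one]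
  have hmono : (monomial m (coeff m f) : MvPolynomial (Fin n) F) * starP q g
      = coeff m f • (monomial m 1 * starP q g) := by
    rw [hm1, smul_mul_assoc]
  rw [hmono, map_smul, smul_eq_mul, eps_mul_monomial, eps_starP]
  congr 1
  have key : ∀ m' ∈ g.support, coeff m' g * W (F := F) q 0 (m + (qhat q - m'))
      = if m' = m then coeff m' g else 0 := by
    intro m' hm'
    rw [W_def]
    have hcond : (∀ j, q j ∣ ((m + (qhat q - m')) j + (0 : Fin n →₀ ℕ) j)) ↔ m' = m := by
      constructor
      · intro hall
        ext j
        have := hall j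
        rw [Finsupp.add_apply, Finsupp.tsub_apply, qhat_apply, Finsupp.coe_zero,
          Pi.zero_apply, add_zero] at this
        exact ((natL5 (q j) (m j) (m' j) (hq j) (hf m hm j) (hg m' hm' j)).mp this).symm
      · intro heq j
        rw [heq, Finsupp.add_apply, Finsupp.tsub_apply, qhat_apply, Finsupp.coe_zero,
          Pi.zero_apply, add_zero]
        rw [heq] at hm'
        exact (natL5 (q j) (m j) (m j) (hq j) (hf m hm j) (hg m hm' j)).mpr rfl
    by_cases hmm : m' = m
    · rw [if_pos ((hcond.mpr hmm)), if_pos hmm, mul_one]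
    · rw [if_neg (fun hc => hmm (hcond.mp hc)), if_neg hmm, mul_zero]
  rw [Finset.sum_congr rfl key, Finset.sum_ite_eq' g.support m (fun m' => coeff m' g)]
  by_cases h : m ∈ g.support
  · rw [if_pos h]
  · rw [if_neg h, MvPolynomial.notMem_support_iff.mp h]

/-- membership of `X^a * t` in a monomial ideal -/
theorem monomial_mul_mem_span_iff (e : Fin n → ℕ) (a : Fin n →₀ ℕ)
    (t : MvPolynomial (Fin n) F)
    (hiff : ∀ h : MvPolynomial (Fin n) F,
      h ∈ Ideal.span (Set.range fun j : Fin n => (X j : MvPolynomial (Fin n) F) ^ e j)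
        ↔ ∀ m ∈ h.support, ∃ j, e j ≤ m j) :
    monomial a 1 * t ∈ Ideal.span (Set.range fun j : Fin n => (X j : MvPolynomial (Fin n) F) ^ e j)
      ↔ ∀ m ∈ t.support, ∃ j, e j ≤ a j + m j := by
  classical
  rw [hiff]
  constructor
  · intro hall m hm
    have hmem : a + m ∈ ((monomial a 1 : MvPolynomial (Fin n) F) * t).support := by
      rw [MvPolynomial.mem_support_iff, coeff_monomial_mul, one_mul]
      exact MvPolynomial.mem_support_iff.mp hm
    obtain ⟨j, hj⟩ := hall (a + m) hmem
    exact ⟨j, by rwa [Finsupp.add_apply] at hj⟩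
  · intro hall k hk
    have := MvPolynomial.support_mul (monomial a 1) t hk
    rw [support_monomial, if_neg (one_ne_zero)] at this
    rcases Finset.mem_add.mp this with ⟨x, hx, b, hb, rfl⟩
    rw [Finset.mem_singleton.mp hx]
    obtain ⟨j, hj⟩ := hall b hb
    exact ⟨j, by rw [Finsupp.add_apply]; exact hj⟩

end Q


section Claims
variable {F : Type} [Field F] {n : ℕ}

theorem claimB (q Nv : Fin n → ℕ) (hq : ∀ j, 0 < q j) (g : MvPolynomial (Fin n) F)
    (hg : ∀ m ∈ g.support, ∀ j, m j < q j) :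
    ((∏ j : Fin n, ((X j : MvPolynomial (Fin n) F) - 1) ^ Nv j) * g ∈ Igen (F := F) q) ↔
    (∀ f : MvPolynomial (Fin n) F, (∀ m ∈ f.support, ∀ j, m j < q j) →
       Ideal.Quotient.mk (Igen (F := F) q) f ∈ Ideal.span
         {Ideal.Quotient.mk (Igen (F := F) q)
           (∏ j : Fin n, ((X j : MvPolynomial (Fin n) F) - 1) ^ Nv j)} →
       ∑ m ∈ f.support, coeff m f * coeff m g = 0) := by
  classical
  set yN : MvPolynomial (Fin n) F := ∏ j : Fin n, ((X j : MvPolynomial (Fin n) F) - 1) ^ Nv j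
    with hyN
  set G : MvPolynomial (Fin n) F := starP q g with hG
  have hgle : ∀ m ∈ g.support, ∀ j, m j ≤ q j := fun m hm j => le_of_lt (hg m hm j)
  have hWper : ∀ (a : Fin n →₀ ℕ) (m : Fin n →₀ ℕ) (j : Fin n),
      W (F := F) q a (m + Finsupp.single j (q j)) = W q a m := fun a m j => W_periodic q a m j
  constructor
  · intro hyNg f hf hfC
    have hstar : yN * G ∈ Igen (F := F) q := star_mem_of q hq Nv g hgle hyNg
    obtain ⟨a, ha⟩ := Ideal.mem_span_singleton'.mp hfC
    obtain ⟨t, rfl⟩ := Ideal.Quotient.mk_surjective a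
    have hft : f - t * yN ∈ Igen (F := F) q := by
      rw [← Ideal.Quotient.eq]
      rw [RingHom.map_mul, ha]
    rw [pairing q hq f g hf hg]
    have hsplit : f * G = G * (f - t * yN) + t * (yN * G) := by ring
    rw [hsplit, map_add,
      eps_mul_mem_span q (W q 0) (hWper 0) (u := f - t * yN) hft G,
      eps_mul_mem_span q (W q 0) (hWper 0) (u := yN * G) hstar t, add_zero]
  · intro horth
    have key : ∀ t : MvPolynomial (Fin n) F, eps (W q 0) (t * (yN * G)) = 0 := by
      intro t
      set f : MvPolynomial (Fin n) F := red q (t * yN) with hf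
      have hfred : ∀ m ∈ f.support, ∀ j, m j < q j := red_reduced q hq (t * yN)
      have hfmk : Ideal.Quotient.mk (Igen (F := F) q) f
          = Ideal.Quotient.mk (Igen (F := F) q) (t * yN) := red_mk q (t * yN)
      have hfC : Ideal.Quotient.mk (Igen (F := F) q) f ∈ Ideal.span
          {Ideal.Quotient.mk (Igen (F := F) q) yN} := by
        rw [hfmk, RingHom.map_mul]
        exact Ideal.mem_span_singleton'.mpr ⟨Ideal.Quotient.mk _ t, rfl⟩
      have h0 := horth f hfred hfC
      rw [pairing q hq f g hfred hg] at h0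
      have hmem : t * yN - f ∈ Igen (F := F) q := by
        rw [← Ideal.Quotient.eq]; exact hfmk.symm
      have hsplit : t * (yN * G) = f * G + G * (t * yN - f) := by ring
      rw [hsplit, map_add, h0, eps_mul_mem_span q (W q 0) (hWper 0) hmem G, add_zero]
    have hredzero : red (F := F) q (yN * G) = 0 := by
      apply MvPolynomial.ext
      intro r
      rw [coeff_zero]
      by_cases hrbox : ∀ j, r j < q j
      · have e1 : coeff r (red (F := F) q (yN * G))
            = eps (W q (mstar q r)) (red q (yN * G)) :=
          (eps_W_reduced q hq r _ hrbox (red_reduced q hq _)).symm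
        have hdiff : red (F := F) q (yN * G) - yN * G ∈ Igen (F := F) q := by
          rw [← Ideal.Quotient.eq]; exact red_mk q _
        have e2 : eps (W q (mstar q r)) (red (F := F) q (yN * G))
            = eps (W q (mstar q r)) (yN * G) := by
          rw [show red (F := F) q (yN * G) = (red q (yN * G) - yN * G) + yN * G by ring,
            map_add, eps_mem_span q _ (hWper (mstar q r)) hdiff, zero_add]
        have e3 : eps (W (F := F) q (mstar q r)) (yN * G)
            = eps (W q 0) (monomial (mstar q r) 1 * (yN * G)) := by
          rw [eps_mul_monomial, W_shift]
        rw [e1, e2, e3, key (monomial (mstar q r) 1)]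
      · have hnot : r ∉ (red (F := F) q (yN * G)).support := fun hmem =>
          hrbox (fun j => red_reduced q hq _ r hmem j)
        exact MvPolynomial.notMem_support_iff.mp hnot
    have hmk0 : Ideal.Quotient.mk (Igen (F := F) q) (yN * G) = 0 := by
      rw [← red_mk q (yN * G), hredzero, RingHom.map_zero]
    have hin : yN * G ∈ Igen (F := F) q := Ideal.Quotient.eq_zero_iff_mem.mp hmk0
    have := star_mem_of q hq Nv G (starP_support q g) hin
    rwa [starP_starP q g hgle] at this

theorem claimA (p : ℕ) [Fact p.Prime] [CharP F p] (s Nv : Fin n → ℕ)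
    (hN : ∀ j, Nv j ≤ p ^ s j) (g : MvPolynomial (Fin n) F) :
    (Ideal.Quotient.mk (Igen (F := F) fun j => p ^ s j) g ∈ Ideal.span
        (Set.range fun j : Fin n =>
          Ideal.Quotient.mk (Igen (F := F) fun j => p ^ s j)
            (((X j : MvPolynomial (Fin n) F) - 1) ^ (p ^ s j - Nv j))))
    ↔ (∏ j : Fin n, ((X j : MvPolynomial (Fin n) F) - 1) ^ Nv j) * g
        ∈ Igen (F := F) (fun j => p ^ s j) := by
  classical
  set q : Fin n → ℕ := fun j => p ^ s j with hqdef
  have hq : ∀ j, 0 < q j := fun j => pow_pos (Fact.out : p.Prime).pos _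
  set genC : Fin n → MvPolynomial (Fin n) F :=
    fun j => ((X j : MvPolynomial (Fin n) F) - 1) ^ (q j - Nv j) with hgenC
  set genI : Fin n → MvPolynomial (Fin n) F :=
    fun j => (X j : MvPolynomial (Fin n) F) ^ q j - 1 with hgenI
  have step1 : (Ideal.Quotient.mk (Igen (F := F) q) g ∈ Ideal.span
        (Set.range fun j : Fin n => Ideal.Quotient.mk (Igen (F := F) q) (genC j)))
      ↔ g ∈ Ideal.span (Set.range genC) ⊔ Ideal.span (Set.range genI) := by
    have hD0 : Ideal.span (Set.range fun j : Fin n =>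
          Ideal.Quotient.mk (Igen (F := F) q) (genC j))
        = Ideal.map (Ideal.Quotient.mk (Igen (F := F) q)) (Ideal.span (Set.range genC)) := by
      rw [Ideal.map_span, ← Set.range_comp]
      rfl
    rw [hD0]
    constructor
    · intro hmem
      obtain ⟨x, hx, hxg⟩ :=
        (Ideal.mem_map_iff_of_surjective _ Ideal.Quotient.mk_surjective).mp hmem
      have hxgI : x - g ∈ Igen (F := F) q := Ideal.Quotient.eq.mp hxg
      rw [show g = x + -(x - g) by ring]
      exact Submodule.add_mem _ (Ideal.mem_sup_left hx)
        (Ideal.mem_sup_right (neg_mem (by rw [← Igen_def q]; exact hxgI)))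
    · intro hmem
      obtain ⟨x, hx, y, hy, rfl⟩ := Submodule.mem_sup.mp hmem
      rw [RingHom.map_add]
      have h2 : Ideal.Quotient.mk (Igen (F := F) q) y = 0 :=
        Ideal.Quotient.eq_zero_iff_mem.mpr (by rw [Igen_def q]; exact hy)
      rw [h2, add_zero]
      exact Ideal.mem_map_of_mem _ hx
  have himgC : ⇑(sigE (F := F) (n := n)) '' Set.range genC
      = Set.range fun j : Fin n => (X j : MvPolynomial (Fin n) F) ^ (q j - Nv j) := by
    rw [← Set.range_comp]
    apply congrArg Set.range
    funext j
    exact sigE_sub_one_pow (q j - Nv j) j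
  have himgI : ⇑(sigE (F := F) (n := n)) '' Set.range genI
      = Set.range fun j : Fin n => (X j : MvPolynomial (Fin n) F) ^ q j := by
    rw [← Set.range_comp]
    apply congrArg Set.range
    funext j
    exact sigE_pow_char_sub_one p (s j) j
  have step2 : g ∈ Ideal.span (Set.range genC) ⊔ Ideal.span (Set.range genI)
      ↔ sigE g ∈ Ideal.span (Set.range fun j : Fin n =>
            (X j : MvPolynomial (Fin n) F) ^ (q j - Nv j))
          ⊔ Ideal.span (Set.range fun j : Fin n => (X j : MvPolynomial (Fin n) F) ^ q j) := by
    rw [← Ideal.span_union, ← Ideal.span_union, mem_span_iff_sig, Set.image_union,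
      himgC, himgI]
  have step3 : Ideal.span (Set.range fun j : Fin n =>
          (X j : MvPolynomial (Fin n) F) ^ (q j - Nv j))
        ⊔ Ideal.span (Set.range fun j : Fin n => (X j : MvPolynomial (Fin n) F) ^ q j)
      = Ideal.span (Set.range fun j : Fin n =>
          (X j : MvPolynomial (Fin n) F) ^ (q j - Nv j)) := by
    apply sup_eq_left.mpr
    apply Ideal.span_le.mpr
    rintro x ⟨j, rfl⟩
    show (X j : MvPolynomial (Fin n) F) ^ q j ∈
      (Ideal.span (Set.range fun j : Fin n =>
        (X j : MvPolynomial (Fin n) F) ^ (q j - Nv j)) : Set (MvPolynomial (Fin n) F))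
    rw [show (X j : MvPolynomial (Fin n) F) ^ q j
        = X j ^ (q j - (q j - Nv j)) * X j ^ (q j - Nv j) by
      rw [← pow_add]
      congr 1
      have := hN j
      omega]
    exact Ideal.mul_mem_left _ _ (Ideal.subset_span ⟨j, rfl⟩)
  have step4 : sigE g ∈ Ideal.span (Set.range fun j : Fin n =>
        (X j : MvPolynomial (Fin n) F) ^ (q j - Nv j))
      ↔ ∀ m ∈ (sigE (F := F) g).support, ∃ j, q j - Nv j ≤ m j :=
    mem_span_X_pow_iff _ _
  -- right-hand side
  have hmapyN : sigE ((∏ j : Fin n, ((X j : MvPolynomial (Fin n) F) - 1) ^ Nv j) * g)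
      = monomial (Finsupp.equivFunOnFinite.symm Nv) 1 * sigE g := by
    rw [map_mul]
    congr 1
    rw [map_prod]
    have : ∀ j : Fin n, sigE (((X j : MvPolynomial (Fin n) F) - 1) ^ Nv j)
        = (X j : MvPolynomial (Fin n) F) ^ Nv j := fun j => sigE_sub_one_pow (Nv j) j
    rw [Finset.prod_congr rfl fun j _ => this j]
    rw [monomial_eq_prod, map_one, one_mul]
    rfl
  have stepR : (∏ j : Fin n, ((X j : MvPolynomial (Fin n) F) - 1) ^ Nv j) * g
        ∈ Igen (F := F) q
      ↔ ∀ m ∈ (sigE (F := F) g).support, ∃ j, q j ≤ Nv j + m j := by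
    rw [Igen_def q, mem_span_iff_sig, himgI, hmapyN,
      monomial_mul_mem_span_iff q (Finsupp.equivFunOnFinite.symm Nv) (sigE g)
        (fun h => mem_span_X_pow_iff q h)]
    rfl
  rw [show (Ideal.span (Set.range fun j : Fin n =>
      Ideal.Quotient.mk (Igen (F := F) q)
        (((X j : MvPolynomial (Fin n) F) - 1) ^ (p ^ s j - Nv j))))
    = Ideal.span (Set.range fun j : Fin n =>
        Ideal.Quotient.mk (Igen (F := F) q) (genC j)) from rfl]
  rw [step1, step2, step3, step4, stepR]
  apply forall₂_congr
  intro m _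
  apply exists_congr
  intro j
  have := hN j
  have : Nv j ≤ q j := hN j
  omega

end Claims

end Stmt8Aux


/-- The Euclidean dual of the monomial-like code
`C = ⟨(x₁−1)^{N₁}⋯(x_n−1)^{N_n}⟩ ⊆ F_q[x]/⟨x_j^{p^{s_j}}−1⟩` is
`C^⊥ = ⟨(x₁−1)^{p^{s₁}−N₁}, …, (x_n−1)^{p^{s_n}−N_n}⟩`. Elements of the quotient are identified
with the coefficient vectors of their unique degree-bounded representatives, and the Euclidean
inner product of two such representatives `f`, `g` is `∑ m, f_m · g_m`. -/
theorem stmt_8 (p : ℕ) (hp : p.Prime) (F : Type) [Field F] [Fintype F] [CharP F p]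
    (n : ℕ) (s N : Fin n → ℕ) (hs : ∀ j, 0 < s j) (hN : ∀ j, N j ≤ p ^ s j)
    (I : Ideal (MvPolynomial (Fin n) F))
    (hI : I = Ideal.span (Set.range fun j : Fin n => X j ^ p ^ s j - 1))
    (C : Ideal (MvPolynomial (Fin n) F ⧸ I))
    (hC : C = Ideal.span {Ideal.Quotient.mk I (∏ j : Fin n, (X j - 1) ^ N j)})
    (D : Ideal (MvPolynomial (Fin n) F ⧸ I))
    (hD : D = Ideal.span
      (Set.range fun j : Fin n => Ideal.Quotient.mk I ((X j - 1) ^ (p ^ s j - N j)))) :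
    ∀ g : MvPolynomial (Fin n) F, (∀ j, degreeOf j g < p ^ s j) →
      (Ideal.Quotient.mk I g ∈ D ↔
        ∀ f : MvPolynomial (Fin n) F, (∀ j, degreeOf j f < p ^ s j) →
          Ideal.Quotient.mk I f ∈ C →
            ∑ m ∈ f.support, coeff m f * coeff m g = 0) := by
  haveI : Fact p.Prime := ⟨hp⟩
  have hIgen : I = Stmt8Aux.Igen (F := F) (fun j => p ^ s j) := by rw [hI]; rfl
  subst hC
  subst hD
  subst hIgen
  intro g hgdeg
  have hq : ∀ j, 0 < p ^ s j := fun j => pow_pos hp.pos _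
  have hdegiff : ∀ f : MvPolynomial (Fin n) F,
      (∀ j, degreeOf j f < p ^ s j) ↔ (∀ m ∈ f.support, ∀ j, m j < p ^ s j) := by
    intro f
    constructor
    · intro h m hm j
      exact (degreeOf_lt_iff (hq j)).mp (h j) m hm
    · intro h j
      exact (degreeOf_lt_iff (hq j)).mpr fun m hm => h m hm j
  have hg' := (hdegiff g).mp hgdeg
  have hA := Stmt8Aux.claimA p s N hN g
  have hB := Stmt8Aux.claimB (fun j => p ^ s j) N hq g hg'
  constructor
  · intro hDmem f hfdeg hfC
    exact (hB.mp (hA.mp hDmem)) f ((hdegiff f).mp hfdeg) hfC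
  · intro horth
    exact hA.mpr (hB.mpr fun f hfs hfC => horth f ((hdegiff f).mpr hfs) hfC)
end

section
/- Let p be a prime, F_q a finite field of characteristic p, s_1,…,s_n positive integers, and N_1,…,N_n integers with 0 ≤ N_j ≤ p^{s_j} for all j. Then the ideal C = ⟨(x_1 − 1)^{N_1}···(x_n − 1)^{N_n}⟩ of R = F_q[x_1,…,x_n]/⟨x_1^{p^{s_1}} − 1, …, x_n^{p^{s_n}} − 1⟩, viewed as an F_q-vector space, has dimension dim_{F_q}(C) = (p^{s_1} − N_1)(p^{s_2} − N_2)···(p^{s_n} − N_n). -/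
open MvPolynomial

set_option synthInstance.maxHeartbeats 1000000
set_option maxHeartbeats 1000000


theorem aux_monomial_prod {F : Type} [CommSemiring F] {n : ℕ} (N : Fin n → ℕ) :
    (∏ j : Fin n, (X j : MvPolynomial (Fin n) F) ^ N j)
      = monomial (Finsupp.equivFunOnFinite.symm N) 1 := by
  have h1 : ∏ j : Fin n, (X j : MvPolynomial (Fin n) F) ^ N j
      = ∏ j : Fin n, X j ^ (Finsupp.equivFunOnFinite.symm N) j :=
    Finset.prod_congr rfl fun j _ => by rw [Finsupp.equivFunOnFinite_symm_apply_apply]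
  rw [h1, ← prod_X_pow_eq_monomial]
  exact (Finset.prod_subset (Finset.subset_univ _) fun j _ hj => by
    rw [Finsupp.notMem_support_iff.mp hj, pow_zero]).symm

theorem aux_finrank {F : Type} [Field F] {n : ℕ} (M N : Fin n → ℕ) :
    Module.finrank F (Submodule.restrictScalars F
      (Ideal.span {Ideal.Quotient.mk
        (Ideal.span (Set.range fun j : Fin n => (X j : MvPolynomial (Fin n) F) ^ M j))
        (monomial (Finsupp.equivFunOnFinite.symm N) 1)})) = ∏ j, (M j - N j) := by
  classical
  set J : Ideal (MvPolynomial (Fin n) F) :=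
    Ideal.span (Set.range fun j : Fin n => (X j : MvPolynomial (Fin n) F) ^ M j) with hJdef
  set N' : Fin n →₀ ℕ := Finsupp.equivFunOnFinite.symm N with hN'def
  have hN' : ∀ j, N' j = N j := fun j => rfl
  have hJ' : J = Ideal.span ((fun s => monomial s (1 : F)) ''
      (Set.range fun j : Fin n => Finsupp.single j (M j))) := by
    rw [hJdef, ← Set.range_comp]
    refine congrArg Ideal.span (congrArg Set.range ?_)
    funext j
    simp [Function.comp, X_pow_eq_monomial]
  have hzero : ∀ a : Fin n →₀ ℕ, (∃ j, M j ≤ a j) →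
      Ideal.Quotient.mk J (monomial a (1:F)) = 0 := by
    rintro a ⟨j, hj⟩
    rw [Ideal.Quotient.eq_zero_iff_mem, hJ', mem_ideal_span_monomial_image]
    intro xi hxi
    rw [support_monomial, if_neg (one_ne_zero (α := F)), Finset.mem_singleton] at hxi
    subst hxi
    exact ⟨Finsupp.single j (M j), Set.mem_range_self j, Finsupp.single_le_iff.mpr hj⟩
  set d : (∀ j : Fin n, Fin (M j - N j)) → (Fin n →₀ ℕ) :=
    fun i => Finsupp.equivFunOnFinite.symm (fun j => (i j : ℕ) + N j) with hddef
  have hd : ∀ i j, d i j = (i j : ℕ) + N j := fun i j => rfl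
  have hlt : ∀ i j, d i j < M j := by
    intro i j
    have h1 : (i j : ℕ) < M j - N j := (i j).isLt
    rw [hd]; omega
  have hdinj : Function.Injective d := by
    intro i i' h
    funext j
    have h2 : d i j = d i' j := by rw [h]
    rw [hd, hd] at h2
    exact Fin.ext (by omega)
  set v : (∀ j : Fin n, Fin (M j - N j)) → (MvPolynomial (Fin n) F ⧸ J) :=
    fun i => Ideal.Quotient.mk J (monomial (d i) 1) with hvdef
  have hli : LinearIndependent F v := by
    rw [linearIndependent_iff]
    intro l hl
    have hP : Ideal.Quotient.mk J (∑ i ∈ l.support, monomial (d i) (l i)) = 0 := by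
      rw [← hl, Finsupp.linearCombination_apply, Finsupp.sum, map_sum]
      refine Finset.sum_congr rfl fun i _ => ?_
      rw [hvdef, ← Ideal.Quotient.mkₐ_eq_mk F, ← map_smul, smul_monomial, smul_eq_mul, mul_one]
    rw [Ideal.Quotient.eq_zero_iff_mem, hJ', mem_ideal_span_monomial_image] at hP
    ext i0
    by_contra h0
    have hi0 : i0 ∈ l.support := Finsupp.mem_support_iff.mpr h0
    have hco : coeff (d i0) (∑ i ∈ l.support, monomial (d i) (l i)) = l i0 := by
      rw [coeff_sum]
      rw [Finset.sum_eq_single i0]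
      · rw [coeff_monomial, if_pos rfl]
      · intro i _ hne
        rw [coeff_monomial, if_neg (fun h => hne (hdinj h))]
      · intro h; exact absurd hi0 h
    have hmem : d i0 ∈ (∑ i ∈ l.support, monomial (d i) (l i)).support :=
      MvPolynomial.mem_support_iff.mpr (by rw [hco]; exact h0)
    obtain ⟨si, ⟨j, rfl⟩, hle⟩ := hP _ hmem
    have := Finsupp.single_le_iff.mp hle
    exact absurd this (not_le.mpr (hlt i0 j))
  have hspan : Submodule.restrictScalars F
      (Ideal.span {Ideal.Quotient.mk J (monomial N' (1:F))})
      = Submodule.span F (Set.range v) := by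
    apply le_antisymm
    · intro x hx
      rw [Submodule.restrictScalars_mem, Ideal.mem_span_singleton'] at hx
      obtain ⟨a, rfl⟩ := hx
      obtain ⟨f, rfl⟩ := Ideal.Quotient.mk_surjective a
      induction f using MvPolynomial.induction_on' with
      | add f g hf hg =>
        rw [map_add, add_mul]
        exact Submodule.add_mem _ hf hg
      | monomial u a =>
        have key : Ideal.Quotient.mk J (monomial u a) * Ideal.Quotient.mk J (monomial N' 1)
            = a • Ideal.Quotient.mk J (monomial (u + N') (1:F)) := by
          rw [← map_mul, monomial_mul, mul_one, ← Ideal.Quotient.mkₐ_eq_mk F, ← map_smul,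
            smul_monomial, smul_eq_mul, mul_one]
        rw [key]
        by_cases hcase : ∀ j, u j + N j < M j
        · have hi : ∀ j, u j < M j - N j := fun j => by have := hcase j; omega
          have : (u + N') = d (fun j => ⟨u j, hi j⟩) := by
            ext j
            rw [hd]
            simp [hN']
          rw [this]
          exact Submodule.smul_mem _ _ (Submodule.subset_span (Set.mem_range_self _))
        · push_neg at hcase
          obtain ⟨j, hj⟩ := hcase
          rw [hzero (u + N') ⟨j, by simpa [hN'] using hj⟩, smul_zero]
          exact Submodule.zero_mem _
    · rw [Submodule.span_le]
      rintro x ⟨i, rfl⟩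
      rw [SetLike.mem_coe, Submodule.restrictScalars_mem]
      have : v i = Ideal.Quotient.mk J (monomial (Finsupp.equivFunOnFinite.symm fun j => (i j : ℕ)) 1)
          * Ideal.Quotient.mk J (monomial N' 1) := by
        have hexp : d i = (Finsupp.equivFunOnFinite.symm fun j => (i j : ℕ)) + N' := by
          ext j
          rw [hd]
          simp [hN', Finsupp.equivFunOnFinite_symm_apply_apply]
        simp only [hvdef]
        rw [hexp, ← map_mul, monomial_mul, mul_one]
      rw [this]
      exact Ideal.mul_mem_left _ _ (Ideal.mem_span_singleton_self _)
  rw [hspan, finrank_span_eq_card hli, Fintype.card_pi]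
  simp

/-- The monomial-like code `C = ⟨(x₁−1)^{N₁}⋯(x_n−1)^{N_n}⟩ ⊆ F_q[x]/⟨x_j^{p^{s_j}}−1⟩`, viewed
as an `F_q`-vector space, has dimension `(p^{s₁}−N₁)⋯(p^{s_n}−N_n)`. -/
theorem stmt_10 (p : ℕ) (hp : p.Prime) (F : Type) [Field F] [Fintype F] [CharP F p]
    (n : ℕ) (s N : Fin n → ℕ) (hs : ∀ j, 0 < s j) (hN : ∀ j, N j ≤ p ^ s j)
    (I : Ideal (MvPolynomial (Fin n) F))
    (hI : I = Ideal.span (Set.range fun j : Fin n => X j ^ p ^ s j - 1))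
    (C : Ideal (MvPolynomial (Fin n) F ⧸ I))
    (hC : C = Ideal.span {Ideal.Quotient.mk I (∏ j : Fin n, (X j - 1) ^ N j)}) :
    Module.finrank F (Submodule.restrictScalars F C) = ∏ j : Fin n, (p ^ s j - N j) := by
  classical
  haveI := Fact.mk hp
  set J : Ideal (MvPolynomial (Fin n) F) :=
    Ideal.span (Set.range fun j : Fin n => (X j : MvPolynomial (Fin n) F) ^ p ^ s j) with hJdef
  set τ : MvPolynomial (Fin n) F ≃ₐ[F] MvPolynomial (Fin n) F :=
    AlgEquiv.ofAlgHom (aeval fun j => X j - 1) (aeval fun j => X j + 1)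
      (MvPolynomial.algHom_ext fun j => by
        rw [AlgHom.comp_apply, aeval_X, map_add, aeval_X, map_one, AlgHom.id_apply]
        ring)
      (MvPolynomial.algHom_ext fun j => by
        rw [AlgHom.comp_apply, aeval_X, map_sub, aeval_X, map_one, AlgHom.id_apply]
        ring) with hτdef
  have hτX : ∀ j, τ (X j) = X j - 1 := fun j => aeval_X _ j
  have hmap : I = Ideal.map (τ : MvPolynomial (Fin n) F →+* MvPolynomial (Fin n) F) J := by
    rw [hI, hJdef, Ideal.map_span, ← Set.range_comp]
    refine congrArg Ideal.span (congrArg Set.range ?_)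
    funext j
    simp only [Function.comp_apply, map_pow, RingHom.coe_coe, hτX]
    rw [sub_pow_char_pow, one_pow]
  set e : (MvPolynomial (Fin n) F ⧸ J) ≃ₐ[F] (MvPolynomial (Fin n) F ⧸ I) :=
    Ideal.quotientEquivAlg J I τ hmap with hedef
  have he : ∀ x, e (Ideal.Quotient.mk J x) = Ideal.Quotient.mk I (τ x) := fun x => rfl
  set N' : Fin n →₀ ℕ := Finsupp.equivFunOnFinite.symm N with hN'def
  have hg : e (Ideal.Quotient.mk J (monomial N' 1)) =
      Ideal.Quotient.mk I (∏ j : Fin n, (X j - 1) ^ N j) := by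
    rw [he]
    congr 1
    rw [← aux_monomial_prod N, map_prod]
    exact Finset.prod_congr rfl fun j _ => by rw [map_pow, hτX]
  have hCmap : Submodule.restrictScalars F C =
      Submodule.map (e.toLinearEquiv : (MvPolynomial (Fin n) F ⧸ J) →ₗ[F] (MvPolynomial (Fin n) F ⧸ I))
        (Submodule.restrictScalars F (Ideal.span {Ideal.Quotient.mk J (monomial N' 1)})) := by
    ext x
    simp only [Submodule.mem_map, Submodule.restrictScalars_mem]
    constructor
    · intro hx
      rw [hC, Ideal.mem_span_singleton'] at hx
      obtain ⟨a, rfl⟩ := hx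
      refine ⟨e.symm a * Ideal.Quotient.mk J (monomial N' 1),
        Ideal.mul_mem_left _ _ (Ideal.mem_span_singleton_self _), ?_⟩
      show e (e.symm a * Ideal.Quotient.mk J (monomial N' 1)) = _
      rw [map_mul, hg, AlgEquiv.apply_symm_apply]
    · rintro ⟨y, hy, rfl⟩
      rw [Ideal.mem_span_singleton'] at hy
      obtain ⟨a, rfl⟩ := hy
      rw [hC]
      have hx2 : (e.toLinearEquiv : (MvPolynomial (Fin n) F ⧸ J) →ₗ[F] (MvPolynomial (Fin n) F ⧸ I))
          (a * Ideal.Quotient.mk J (monomial N' 1))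
          = e a * Ideal.Quotient.mk I (∏ j : Fin n, (X j - 1) ^ N j) := by
        show e _ = _
        rw [map_mul, hg]
      rw [hx2]
      exact Ideal.mem_span_singleton'.mpr ⟨e a, rfl⟩
  rw [hCmap, LinearEquiv.finrank_map_eq]
  exact aux_finrank (fun j => p ^ s j) N
end

section
/- Let p be a prime, F_q a finite field of characteristic p, s_1,…,s_n positive integers, and N_1,…,N_n integers with 0 ≤ N_j ≤ p^{s_j} for all j. Let C = ⟨(x_1 − 1)^{N_1}···(x_n − 1)^{N_n}⟩ ⊆ R = F_q[x_1,…,x_n]/⟨x_1^{p^{s_1}} − 1, …, x_n^{p^{s_n}} − 1⟩. Let T = { (a_1,…,a_n) ∈ ℕ^n : 0 ≤ a_j < p^{s_j} for all j, and p^{s_j} − N_j ≤ a_j for at least one j }, and let B = { (x_1 − 1)^{a_1}···(x_n − 1)^{a_n} : (a_1,…,a_n) ∈ T } ⊆ R. Then |T| = p^{s_1}···p^{s_n} − (p^{s_1} − N_1)···(p^{s_n} − N_n), and B is an F_q-basis of the Euclidean dual code C^⊥. -/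
open MvPolynomial Finset

set_option synthInstance.maxHeartbeats 1000000
set_option maxHeartbeats 1000000

namespace Stmt11

open Finset

theorem dvd_choose_pow {p : ℕ} (hp : p.Prime) :
    ∀ s t a : ℕ, t < p ^ s → a < p ^ s → p ^ s ≤ t + a → p ∣ (t + a).choose a := by
  haveI : Fact p.Prime := ⟨hp⟩
  intro s
  induction s with
  | zero => intro t a ht ha h; rw [pow_zero] at ht ha h; omega
  | succ s ih =>
    intro t a ht ha h
    have hp0 : 0 < p := hp.pos
    have hmod : (t + a).choose a ≡
        ((t + a) % p).choose (a % p) * ((t + a) / p).choose (a / p) [MOD p] :=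
      Choose.choose_modEq_choose_mod_mul_choose_div_nat
    rw [← Nat.modEq_zero_iff_dvd]
    refine hmod.trans ?_
    rw [Nat.modEq_zero_iff_dvd]
    have htm : t % p < p := Nat.mod_lt _ hp0
    have ham : a % p < p := Nat.mod_lt _ hp0
    have hsum : t + a = p * (t / p + a / p) + (t % p + a % p) := by
      have h1 := Nat.div_add_mod t p
      have h2 := Nat.div_add_mod a p
      ring_nf
      omega
    by_cases hc : t % p + a % p < p
    · have hdiv : (t + a) / p = t / p + a / p := by
        rw [hsum, Nat.mul_add_div hp0, Nat.div_eq_of_lt hc, add_zero]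
      have ht1 : t / p < p ^ s := Nat.div_lt_of_lt_mul (by rw [← pow_succ']; exact ht)
      have ha1 : a / p < p ^ s := Nat.div_lt_of_lt_mul (by rw [← pow_succ']; exact ha)
      have hge : p ^ s ≤ t / p + a / p := by
        have key : p * p ^ s < p * (t / p + a / p + 1) := by
          rw [pow_succ'] at h
          calc p * p ^ s ≤ p * (t / p + a / p) + (t % p + a % p) := by omega
          _ < p * (t / p + a / p) + p := by omega
          _ = p * (t / p + a / p + 1) := by ring
        have := Nat.lt_of_mul_lt_mul_left key
        omega
      exact Dvd.dvd.mul_left (hdiv ▸ ih (t / p) (a / p) ht1 ha1 hge) _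
    · push_neg at hc
      have hm : (t + a) % p = t % p + a % p - p := by
        rw [hsum, Nat.mul_add_mod, Nat.mod_eq_sub_mod hc, Nat.mod_eq_of_lt (by omega)]
      have hz : ((t + a) % p).choose (a % p) = 0 := by
        rw [hm]
        exact Nat.choose_eq_zero_of_lt (by omega)
      rw [hz, zero_mul]
      exact dvd_zero p

theorem sum_choose_mul {Q : ℕ} (t a : ℕ) (ha : a < Q) :
    ∑ k ∈ Finset.range Q, t.choose k * a.choose k = (t + a).choose a := by
  rw [Nat.add_choose_eq, Finset.Nat.sum_antidiagonal_eq_sum_range_succ_mk]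
  rw [← Finset.sum_subset (Finset.range_subset_range.mpr ha)]
  · refine Finset.sum_congr rfl fun k hk => ?_
    rw [Finset.mem_range, Nat.lt_succ_iff] at hk
    rw [Nat.choose_symm hk]
  · intro k _ hk
    rw [Finset.mem_range, Nat.lt_succ_iff, not_le] at hk
    rw [Nat.choose_eq_zero_of_lt hk, mul_zero]



variable {F : Type} [Field F] {n : ℕ}

/-- functions to finsupp -/
noncomputable def tf (m : Fin n → ℕ) : Fin n →₀ ℕ := Finsupp.equivFunOnFinite.symm m

@[simp] lemma tf_apply (m : Fin n → ℕ) (j : Fin n) : tf m j = m j := rfl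

lemma tf_injective : Function.Injective (tf (n := n)) :=
  Finsupp.equivFunOnFinite.symm.injective

@[simp] lemma tf_coe (k : Fin n →₀ ℕ) : tf (⇑k) = k := Finsupp.equivFunOnFinite_symm_coe k

lemma prod_X_pow (t : Fin n → ℕ) :
    (∏ j, (X j : MvPolynomial (Fin n) F) ^ t j) = monomial (tf t) 1 := by
  rw [← prod_X_pow_eq_monomial]
  refine (Finset.prod_subset (Finset.subset_univ _) ?_).symm
  intro j _ hj
  have : tf t j = 0 := Finsupp.notMem_support_iff.mp hj
  rw [tf_apply] at this
  simp [this]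

lemma prod_smul' (c : Fin n → F) (f : Fin n → MvPolynomial (Fin n) F) :
    (∏ j, c j • f j) = (∏ j, c j) • ∏ j, f j := by
  simp only [smul_eq_C_mul, Finset.prod_mul_distrib, map_prod]

lemma expand (r : F) (m : Fin n → ℕ) :
    (∏ j, ((X j : MvPolynomial (Fin n) F) + C r) ^ m j) =
      ∑ t ∈ Fintype.piFinset (fun j => Finset.range (m j + 1)),
        (∏ j, (((m j).choose (t j) : F) * r ^ (m j - t j))) • monomial (tf t) 1 := by
  have h1 : ∀ j : Fin n, ((X j : MvPolynomial (Fin n) F) + C r) ^ m j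
      = ∑ i ∈ Finset.range (m j + 1), (((m j).choose i : F) * r ^ (m j - i)) • X j ^ i := by
    intro j
    rw [add_pow]
    refine Finset.sum_congr rfl fun i _ => ?_
    rw [smul_eq_C_mul, map_mul, ← C_pow, map_natCast]
    ring
  calc (∏ j, ((X j : MvPolynomial (Fin n) F) + C r) ^ m j)
      = ∏ j, ∑ i ∈ Finset.range (m j + 1), (((m j).choose i : F) * r ^ (m j - i)) • X j ^ i := by
        exact Finset.prod_congr rfl fun j _ => h1 j
    _ = ∑ t ∈ Fintype.piFinset (fun j => Finset.range (m j + 1)),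
          ∏ j, (((m j).choose (t j) : F) * r ^ (m j - t j)) • X j ^ (t j) :=
        Finset.prod_univ_sum _ _
    _ = _ := by
        refine Finset.sum_congr rfl fun t _ => ?_
        rw [prod_smul', prod_X_pow]

lemma coeff_expand (r : F) (m k : Fin n → ℕ) :
    coeff (tf k) (∏ j, ((X j : MvPolynomial (Fin n) F) + C r) ^ m j)
      = ∏ j, (((m j).choose (k j) : F) * r ^ (m j - k j)) := by
  rw [expand]
  rw [MvPolynomial.coeff_sum]
  have h1 : ∀ t ∈ Fintype.piFinset (fun j => Finset.range (m j + 1)),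
      coeff (tf k) ((∏ j, (((m j).choose (t j) : F) * r ^ (m j - t j))) • monomial (tf t) (1:F))
        = if t = k then (∏ j, (((m j).choose (t j) : F) * r ^ (m j - t j))) else 0 := by
    intro t _
    rw [coeff_smul, coeff_monomial, smul_eq_mul]
    by_cases h : t = k
    · simp [h]
    · rw [if_neg (fun hc => h (tf_injective hc)), if_neg h, mul_zero]
  rw [Finset.sum_congr rfl h1, Finset.sum_ite_eq' _ k]
  split_ifs with h
  · rfl
  · rw [Fintype.mem_piFinset] at h
    push_neg at h
    obtain ⟨j, hj⟩ := h
    rw [Finset.mem_range, Nat.lt_succ_iff, not_le] at hj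
    exact (Finset.prod_eq_zero (Finset.mem_univ j) (by
      rw [Nat.choose_eq_zero_of_lt hj, Nat.cast_zero, zero_mul])).symm

lemma support_expand (r : F) (m : Fin n → ℕ) {u : Fin n →₀ ℕ}
    (hu : u ∈ (∏ j, ((X j : MvPolynomial (Fin n) F) + C r) ^ m j).support) :
    ∀ j, u j ≤ m j := by
  classical
  rw [expand] at hu
  obtain ⟨t, ht, hu'⟩ := Finset.mem_biUnion.mp (MvPolynomial.support_sum hu)
  have h2 : u ∈ (monomial (tf t) (1:F)).support := MvPolynomial.support_smul hu'
  rw [support_monomial, if_neg one_ne_zero, Finset.mem_singleton] at h2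
  subst h2
  intro j
  rw [tf_apply]
  have := (Fintype.mem_piFinset.mp ht) j
  rw [Finset.mem_range, Nat.lt_succ_iff] at this
  exact this

lemma ee_eq (m : Fin n → ℕ) :
    (∏ j, ((X j : MvPolynomial (Fin n) F) - 1) ^ m j)
      = ∏ j, ((X j : MvPolynomial (Fin n) F) + C (-1 : F)) ^ m j := by
  simp [sub_eq_add_neg]


section Defs

variable (F : Type) [Field F] (n : ℕ) (q : Fin n → ℕ)

def Box : Finset (Fin n → ℕ) := Fintype.piFinset fun j => Finset.range (q j)

noncomputable def Jdl : Ideal (MvPolynomial (Fin n) F) :=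
  Ideal.span ((fun k => monomial k (1 : F)) '' (Set.range fun j => Finsupp.single j (q j)))

noncomputable def Idl : Ideal (MvPolynomial (Fin n) F) :=
  Ideal.span (Set.range fun j : Fin n => X j ^ q j - 1)

noncomputable def sub1 : MvPolynomial (Fin n) F ≃ₐ[F] MvPolynomial (Fin n) F :=
  AlgEquiv.ofAlgHom (aeval fun j => X j - 1) (aeval fun j => X j + 1)
    (by apply MvPolynomial.algHom_ext; intro j; simp)
    (by apply MvPolynomial.algHom_ext; intro j; simp)

end Defs

section Lemmas

variable {F : Type} [Field F] {n : ℕ} {q : Fin n → ℕ}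

lemma mem_Box {m : Fin n → ℕ} : m ∈ Box n q ↔ ∀ j, m j < q j := by
  simp [Box, Fintype.mem_piFinset]

lemma sub1_apply (x : MvPolynomial (Fin n) F) : sub1 F n x = aeval (fun j => X j - 1) x := rfl

lemma sub1_symm_apply (x : MvPolynomial (Fin n) F) :
    (sub1 F n).symm x = aeval (fun j => X j + 1) x := rfl

lemma sub1_monomial (m : Fin n → ℕ) :
    sub1 F n (monomial (tf m) (1 : F)) = ∏ j, (X j - 1) ^ m j := by
  rw [sub1_apply, aeval_monomial, map_one, one_mul]
  exact Finsupp.prod_fintype _ _ (fun j => pow_zero _)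

lemma sub1_symm_monomial (m : Fin n → ℕ) :
    (sub1 F n).symm (monomial (tf m) (1 : F)) = ∏ j, (X j + 1) ^ m j := by
  rw [sub1_symm_apply, aeval_monomial, map_one, one_mul]
  exact Finsupp.prod_fintype _ _ (fun j => pow_zero _)

lemma sub1_single (j : Fin n) (k : ℕ) :
    sub1 F n (monomial (Finsupp.single j k) (1 : F)) = (X j - 1) ^ k := by
  rw [sub1_apply, aeval_monomial, map_one, one_mul]
  exact Finsupp.prod_single_index (pow_zero _)

variable (hchar : ∀ j, ((X j : MvPolynomial (Fin n) F) - 1) ^ q j = X j ^ q j - 1)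

include hchar in
lemma map_Jdl : (Jdl F n q).map (sub1 F n : MvPolynomial (Fin n) F →+* MvPolynomial (Fin n) F)
    = Idl F n q := by
  rw [Jdl, Idl, Ideal.map_span]
  congr 1
  rw [← Set.range_comp, ← Set.range_comp]
  refine congrArg _ (funext fun j => ?_)
  show sub1 F n (monomial (Finsupp.single j (q j)) (1 : F)) = X j ^ q j - 1
  rw [sub1_single, hchar]

noncomputable def quotEquiv :
    (MvPolynomial (Fin n) F ⧸ Jdl F n q) ≃ₐ[F] (MvPolynomial (Fin n) F ⧸ Idl F n q) :=
  Ideal.quotientEquivAlg (Jdl F n q) (Idl F n q) (sub1 F n) (map_Jdl hchar).symm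

lemma quotEquiv_mk (x : MvPolynomial (Fin n) F) :
    quotEquiv hchar (Ideal.Quotient.mk (Jdl F n q) x)
      = Ideal.Quotient.mk (Idl F n q) (sub1 F n x) := rfl

end Lemmas

section BasisJ

variable {F : Type} [Field F] {n : ℕ} {q : Fin n → ℕ}

lemma mem_Jdl_of_not_box {k : Fin n →₀ ℕ} (hk : ¬ ∀ j, k j < q j) :
    monomial k (1 : F) ∈ Jdl F n q := by
  classical
  push_neg at hk
  obtain ⟨j, hj⟩ := hk
  rw [Jdl, MvPolynomial.mem_ideal_span_monomial_image]
  intro u hu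
  rw [MvPolynomial.support_monomial, if_neg one_ne_zero, Finset.mem_singleton] at hu
  subst hu
  refine ⟨Finsupp.single j (q j), Set.mem_range_self j, ?_⟩
  intro i
  rcases eq_or_ne i j with rfl | hij
  · simpa using hj
  · simp [Finsupp.single_apply, Ne.symm hij]

lemma eq_zero_of_mem_Jdl {x : MvPolynomial (Fin n) F} (hx : x ∈ Jdl F n q)
    (hsupp : ∀ u ∈ x.support, ∀ j, u j < q j) : x = 0 := by
  rw [Jdl, MvPolynomial.mem_ideal_span_monomial_image] at hx
  rw [← MvPolynomial.support_eq_empty, Finset.eq_empty_iff_forall_notMem]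
  intro u hu
  obtain ⟨k, ⟨j, rfl⟩, hle⟩ := hx u hu
  have h1 : q j ≤ u j := by simpa using hle j
  exact absurd (hsupp u hu j) (not_lt.mpr h1)

lemma supp_subset_of_mem_span {S : Set (Fin n →₀ ℕ)} {x : MvPolynomial (Fin n) F}
    (hx : x ∈ Submodule.span F ((fun k => monomial k (1 : F)) '' S)) :
    (x.support : Set (Fin n →₀ ℕ)) ⊆ S := by
  classical
  induction hx using Submodule.span_induction with
  | mem y hy =>
    obtain ⟨k, hk, rfl⟩ := hy
    intro u hu
    rw [Finset.mem_coe, MvPolynomial.support_monomial, if_neg one_ne_zero,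
      Finset.mem_singleton] at hu
    subst hu; exact hk
  | zero => simp
  | add y z _ _ hy hz =>
    intro u hu
    rcases Finset.mem_union.mp (MvPolynomial.support_add (Finset.mem_coe.mp hu)) with h | h
    · exact hy (Finset.mem_coe.mpr h)
    · exact hz (Finset.mem_coe.mpr h)
  | smul c y _ hy =>
    intro u hu
    exact hy (Finset.mem_coe.mpr (MvPolynomial.support_smul (Finset.mem_coe.mp hu)))

/-- the monomial family over the box, in the polynomial ring -/
noncomputable def wFam (q : Fin n → ℕ) (m : ↥(Box n q)) : MvPolynomial (Fin n) F :=
  monomial (tf m.1) 1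

lemma wFam_indep : LinearIndependent F (wFam (F := F) q) := by
  have h := (MvPolynomial.basisMonomials (Fin n) F).linearIndependent
  have h2 := h.comp (fun m : ↥(Box n q) => tf m.1)
    (fun a b hab => Subtype.ext (tf_injective (by simpa using hab)))
  have he : wFam (F := F) q
      = (⇑(MvPolynomial.basisMonomials (Fin n) F)) ∘ (fun m : ↥(Box n q) => tf m.1) := by
    funext m
    simp [wFam, Function.comp, MvPolynomial.coe_basisMonomials]
  rw [he]
  exact h2

lemma span_wFam_le : Submodule.span F (Set.range (wFam (F := F) q)) ≤
    Submodule.span F ((fun k => monomial k (1 : F)) '' {k : Fin n →₀ ℕ | ∀ j, k j < q j}) := by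
  refine Submodule.span_mono ?_
  rintro _ ⟨m, rfl⟩
  exact ⟨tf m.1, fun j => by simpa using mem_Box.mp m.2 j, rfl⟩

lemma vJ_indep : LinearIndependent F
    (fun m : ↥(Box n q) => Ideal.Quotient.mk (Jdl F n q) (monomial (tf m.1) (1:F))) := by
  have hdisj : Disjoint (Submodule.span F (Set.range (wFam (F := F) q)))
      (LinearMap.ker (Ideal.Quotient.mkₐ F (Jdl F n q)).toLinearMap) := by
    rw [Submodule.disjoint_def]
    intro x hx hker
    have h0 : Ideal.Quotient.mk (Jdl F n q) x = 0 := by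
      simpa using LinearMap.mem_ker.mp hker
    have hxJ : x ∈ Jdl F n q := Ideal.Quotient.eq_zero_iff_mem.mp h0
    exact eq_zero_of_mem_Jdl hxJ
      (fun u hu j => supp_subset_of_mem_span (span_wFam_le hx) (Finset.mem_coe.mpr hu) j)
  exact ((wFam_indep (F := F) (q := q)).map hdisj : _)

lemma vJ_span : ⊤ ≤ Submodule.span F
    (Set.range (fun m : ↥(Box n q) => Ideal.Quotient.mk (Jdl F n q) (monomial (tf m.1) (1:F)))) := by
  rintro x -
  obtain ⟨f, rfl⟩ := Ideal.Quotient.mk_surjective x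
  have hL : Ideal.Quotient.mk (Jdl F n q) f = Ideal.Quotient.mkₐ F (Jdl F n q) f := rfl
  rw [hL, MvPolynomial.as_sum f, map_sum]
  refine Submodule.sum_mem _ fun u hu => ?_
  have h1 : (monomial u) (coeff u f) = coeff u f • monomial u (1:F) := by
    rw [MvPolynomial.smul_monomial, smul_eq_mul, mul_one]
  rw [h1, map_smul]
  refine Submodule.smul_mem _ _ ?_
  by_cases hb : ∀ j, u j < q j
  · refine Submodule.subset_span ⟨⟨⇑u, mem_Box.mpr hb⟩, ?_⟩
    simp
  · show Ideal.Quotient.mk (Jdl F n q) (monomial u (1:F)) ∈ _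
    rw [Ideal.Quotient.eq_zero_iff_mem.mpr (mem_Jdl_of_not_box hb)]
    exact Submodule.zero_mem _

noncomputable def basisJ (F : Type) [Field F] (n : ℕ) (q : Fin n → ℕ) :
    Module.Basis ↥(Box n q) F (MvPolynomial (Fin n) F ⧸ Jdl F n q) :=
  Module.Basis.mk vJ_indep vJ_span

variable (hchar : ∀ j, ((X j : MvPolynomial (Fin n) F) - 1) ^ q j = X j ^ q j - 1)

noncomputable def basisE :
    Module.Basis ↥(Box n q) F (MvPolynomial (Fin n) F ⧸ Idl F n q) :=
  (basisJ F n q).map (quotEquiv hchar).toLinearEquiv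

lemma basisE_apply (m : ↥(Box n q)) :
    basisE hchar m = Ideal.Quotient.mk (Idl F n q) (∏ j, (X j - 1) ^ (m.1 j)) := by
  rw [basisE, Module.Basis.map_apply, basisJ, Module.Basis.mk_apply, AlgEquiv.toLinearEquiv_apply,
    quotEquiv_mk, sub1_monomial]

lemma card_box : (Box n q).card = ∏ j, q j := by
  rw [Box, Fintype.card_piFinset]
  simp

include hchar in
lemma finrank_R : Module.finrank F (MvPolynomial (Fin n) F ⧸ Idl F n q) = ∏ j, q j := by
  rw [Module.finrank_eq_card_basis (basisE hchar), Fintype.card_coe, card_box]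

end BasisJ

section BasisMu

variable {F : Type} [Field F] {n : ℕ} {q : Fin n → ℕ}
variable (hchar : ∀ j, ((X j : MvPolynomial (Fin n) F) - 1) ^ q j = X j ^ q j - 1)

include hchar in
lemma X_pow_mem_Jdl (j : Fin n) : (X j : MvPolynomial (Fin n) F) ^ q j ∈ Jdl F n q := by
  rw [X_pow_eq_monomial]
  exact Ideal.subset_span ⟨Finsupp.single j (q j), Set.mem_range_self j, rfl⟩

include hchar in
lemma symm_mem_Jdl {x : MvPolynomial (Fin n) F} (hx : x ∈ Idl F n q) :
    (sub1 F n).symm x ∈ Jdl F n q := by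
  have hmap : Ideal.map ((sub1 F n).symm : MvPolynomial (Fin n) F →+* MvPolynomial (Fin n) F)
      (Idl F n q) ≤ Jdl F n q := by
    rw [Idl, Ideal.map_span, Ideal.span_le]
    rintro _ ⟨_, ⟨j, rfl⟩, rfl⟩
    have h1 : (sub1 F n).symm ((X j : MvPolynomial (Fin n) F) ^ q j - 1) = X j ^ q j := by
      have h2 := congrArg (sub1 F n).symm (hchar j)
      rw [map_pow, map_sub, map_one, sub1_symm_apply, aeval_X] at h2
      rw [← h2]
      simp
    show ((sub1 F n).symm : MvPolynomial (Fin n) F →+* MvPolynomial (Fin n) F)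
      ((X j : MvPolynomial (Fin n) F) ^ q j - 1) ∈ Jdl F n q
    rw [show (((sub1 F n).symm : MvPolynomial (Fin n) F →+* MvPolynomial (Fin n) F)
      ((X j : MvPolynomial (Fin n) F) ^ q j - 1)) = (sub1 F n).symm ((X j : MvPolynomial (Fin n) F) ^ q j - 1) from rfl, h1]
    exact X_pow_mem_Jdl hchar j
  exact hmap (Ideal.mem_map_of_mem _ hx)

lemma symm_support_bound {x : MvPolynomial (Fin n) F}
    (hx : ∀ u ∈ x.support, ∀ j, u j < q j) :
    ∀ u ∈ ((sub1 F n).symm x).support, ∀ j, u j < q j := by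
  classical
  intro u hu
  conv at hu => rw [MvPolynomial.as_sum x, map_sum]
  obtain ⟨t, ht, hu'⟩ := Finset.mem_biUnion.mp (MvPolynomial.support_sum hu)
  have h1 : (sub1 F n).symm (monomial t (coeff t x))
      = coeff t x • ∏ j, ((X j : MvPolynomial (Fin n) F) + C (1:F)) ^ (t j) := by
    have : (monomial t) (coeff t x) = coeff t x • monomial t (1:F) := by
      rw [MvPolynomial.smul_monomial, smul_eq_mul, mul_one]
    rw [this, map_smul, ← tf_coe t, sub1_symm_monomial]
    simp [map_one]
  rw [h1] at hu'
  have h2 := MvPolynomial.support_smul hu'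
  have h3 := support_expand (1 : F) (⇑t) h2
  intro j
  exact lt_of_le_of_lt (h3 j) (hx t ht j)

include hchar in
lemma vMu_indep : LinearIndependent F
    (fun m : ↥(Box n q) => Ideal.Quotient.mk (Idl F n q) (monomial (tf m.1) (1:F))) := by
  have hdisj : Disjoint (Submodule.span F (Set.range (wFam (F := F) q)))
      (LinearMap.ker (Ideal.Quotient.mkₐ F (Idl F n q)).toLinearMap) := by
    rw [Submodule.disjoint_def]
    intro x hx hker
    have h0 : Ideal.Quotient.mk (Idl F n q) x = 0 := by
      simpa using LinearMap.mem_ker.mp hker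
    have hxI : x ∈ Idl F n q := Ideal.Quotient.eq_zero_iff_mem.mp h0
    have hbd : ∀ u ∈ x.support, ∀ j, u j < q j :=
      fun u hu j => supp_subset_of_mem_span (span_wFam_le hx) (Finset.mem_coe.mpr hu) j
    have hy : (sub1 F n).symm x = 0 :=
      eq_zero_of_mem_Jdl (symm_mem_Jdl hchar hxI) (symm_support_bound hbd)
    have := (sub1 F n).symm.injective (by rw [hy, map_zero] : (sub1 F n).symm x = (sub1 F n).symm 0)
    exact this
  exact ((wFam_indep (F := F) (q := q)).map hdisj : _)

variable (hq : ∀ j, 0 < q j)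

include hq in
lemma box_nonempty : Nonempty ↥(Box n q) :=
  ⟨⟨fun _ => 0, mem_Box.mpr (fun j => hq j)⟩⟩

noncomputable def basisMu : Module.Basis ↥(Box n q) F (MvPolynomial (Fin n) F ⧸ Idl F n q) :=
  haveI : Nonempty ↥(Box n q) := box_nonempty hq
  haveI : FiniteDimensional F (MvPolynomial (Fin n) F ⧸ Idl F n q) :=
    Module.Finite.of_basis (basisE hchar)
  basisOfLinearIndependentOfCardEqFinrank (vMu_indep hchar)
    (by rw [finrank_R hchar, Fintype.card_coe, card_box])

lemma basisMu_apply (m : ↥(Box n q)) :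
    basisMu hchar hq m = Ideal.Quotient.mk (Idl F n q) (monomial (tf m.1) (1:F)) := by
  haveI : Nonempty ↥(Box n q) := box_nonempty hq
  haveI : FiniteDimensional F (MvPolynomial (Fin n) F ⧸ Idl F n q) :=
    Module.Finite.of_basis (basisE hchar)
  exact congrFun (coe_basisOfLinearIndependentOfCardEqFinrank _ _) m

include hq in
lemma sum_box_eq {M : Type} [AddCommMonoid M] (G : (Fin n →₀ ℕ) → M)
    (f : MvPolynomial (Fin n) F) (hf : ∀ j, degreeOf j f < q j)
    (hG : ∀ u, coeff u f = 0 → G u = 0) :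
    ∑ m ∈ Box n q, G (tf m) = ∑ u ∈ f.support, G u := by
  have hsub : f.support ⊆ (Box n q).map ⟨tf, tf_injective⟩ := by
    intro u hu
    rw [Finset.mem_map]
    exact ⟨⇑u, mem_Box.mpr (fun j => (MvPolynomial.degreeOf_lt_iff (hq j)).mp (hf j) u hu),
      tf_coe u⟩
  rw [show (∑ m ∈ Box n q, G (tf m)) = ∑ u ∈ (Box n q).map ⟨tf, tf_injective⟩, G u from
    (Finset.sum_map (Box n q) ⟨tf, tf_injective⟩ G).symm]
  refine (Finset.sum_subset hsub ?_).symm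
  intro u _ hu
  exact hG u (MvPolynomial.notMem_support_iff.mp hu)

include hq in
lemma mk_eq_sum (g : MvPolynomial (Fin n) F) (hg : ∀ j, degreeOf j g < q j) :
    Ideal.Quotient.mk (Idl F n q) g
      = ∑ m ∈ Box n q, coeff (tf m) g • Ideal.Quotient.mk (Idl F n q) (monomial (tf m) (1:F)) := by
  rw [sum_box_eq hq (fun u => coeff u g • Ideal.Quotient.mk (Idl F n q) (monomial u (1:F))) g hg
    (fun u h => by simp only [h, zero_smul])]
  conv_lhs => rw [MvPolynomial.as_sum g,
    show Ideal.Quotient.mk (Idl F n q) = ⇑(Ideal.Quotient.mkₐ F (Idl F n q)) from rfl, map_sum]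
  refine Finset.sum_congr rfl fun u _ => ?_
  rw [show (monomial u) (coeff u g) = coeff u g • monomial u (1:F) from
    by rw [MvPolynomial.smul_monomial, smul_eq_mul, mul_one], map_smul]
  rfl

lemma repr_mk (g : MvPolynomial (Fin n) F) (hg : ∀ j, degreeOf j g < q j) (m : ↥(Box n q)) :
    (basisMu hchar hq).repr (Ideal.Quotient.mk (Idl F n q) g) m = coeff (tf m.1) g := by
  have h1 : ∑ m' : ↥(Box n q), coeff (tf m'.1) g • basisMu hchar hq m'
      = Ideal.Quotient.mk (Idl F n q) g := by
    have h2 : ∀ m' : ↥(Box n q), coeff (tf m'.1) g • basisMu hchar hq m'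
        = (fun m : Fin n → ℕ =>
            coeff (tf m) g • Ideal.Quotient.mk (Idl F n q) (monomial (tf m) (1:F))) m'.1 := by
      intro m'
      rw [basisMu_apply]
    rw [Finset.sum_congr rfl (fun m' _ => h2 m')]
    exact (Finset.sum_coe_sort (Box n q) (fun m : Fin n → ℕ =>
      coeff (tf m) g • Ideal.Quotient.mk (Idl F n q) (monomial (tf m) (1:F)))).trans
      (mk_eq_sum hq g hg).symm
  rw [← h1]
  exact congrFun (Module.Basis.repr_sum_self _ _) m

end BasisMu

section Bilin

variable {F : Type} [Field F] {n : ℕ} {q : Fin n → ℕ}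
variable (hchar : ∀ j, ((X j : MvPolynomial (Fin n) F) - 1) ^ q j = X j ^ q j - 1)
variable (hq : ∀ j, 0 < q j)

noncomputable def Bfrm : LinearMap.BilinForm F (MvPolynomial (Fin n) F ⧸ Idl F n q) :=
  LinearMap.mk₂ F
    (fun u v => ∑ m : ↥(Box n q),
      (basisMu hchar hq).repr u m * (basisMu hchar hq).repr v m)
    (fun u u' v => by
      simp only [map_add, Finsupp.add_apply, add_mul, Finset.sum_add_distrib])
    (fun c u v => by
      simp only [map_smul, Finsupp.smul_apply, smul_eq_mul, Finset.mul_sum]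
      exact Finset.sum_congr rfl fun m _ => by ring)
    (fun u v v' => by
      simp only [map_add, Finsupp.add_apply, mul_add, Finset.sum_add_distrib])
    (fun c u v => by
      simp only [map_smul, Finsupp.smul_apply, smul_eq_mul, Finset.mul_sum]
      exact Finset.sum_congr rfl fun m _ => by ring)

lemma Bfrm_apply (u v : MvPolynomial (Fin n) F ⧸ Idl F n q) :
    Bfrm hchar hq u v = ∑ m : ↥(Box n q),
      (basisMu hchar hq).repr u m * (basisMu hchar hq).repr v m := rfl

lemma Bfrm_symm (u v : MvPolynomial (Fin n) F ⧸ Idl F n q) :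
    Bfrm hchar hq u v = Bfrm hchar hq v u := by
  rw [Bfrm_apply, Bfrm_apply]
  exact Finset.sum_congr rfl fun m _ => mul_comm _ _

lemma Bfrm_refl : (Bfrm hchar hq).IsRefl := by
  intro u v h
  rw [Bfrm_symm]
  exact h

lemma Bfrm_nondeg : (Bfrm hchar hq).Nondegenerate := by
  refine (LinearMap.IsRefl.nondegenerate_iff_separatingLeft (Bfrm_refl hchar hq)).mpr ?_
  intro u hu
  have hco : ∀ m0 : ↥(Box n q), (basisMu hchar hq).repr u m0 = 0 := by
    intro m0
    have h1 := hu (basisMu hchar hq m0)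
    rw [Bfrm_apply] at h1
    simp only [Module.Basis.repr_self, Finsupp.single_apply, mul_ite, mul_one, mul_zero] at h1
    rwa [Finset.sum_ite_eq (Finset.univ) m0
      (fun m => (basisMu hchar hq).repr u m), if_pos (Finset.mem_univ m0)] at h1
  have h2 : (basisMu hchar hq).repr u = 0 := Finsupp.ext fun m => by
    rw [Finsupp.coe_zero, Pi.zero_apply]; exact hco m
  have h3 := congrArg (basisMu hchar hq).repr.symm h2
  rwa [LinearEquiv.symm_apply_apply, map_zero] at h3

include hq in
lemma Bfrm_mk_mk_box (f g : MvPolynomial (Fin n) F)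
    (hf : ∀ j, degreeOf j f < q j) (hg : ∀ j, degreeOf j g < q j) :
    Bfrm hchar hq (Ideal.Quotient.mk (Idl F n q) f) (Ideal.Quotient.mk (Idl F n q) g)
      = ∑ m ∈ Box n q, coeff (tf m) f * coeff (tf m) g := by
  rw [Bfrm_apply]
  rw [Finset.sum_congr rfl (fun m (_ : m ∈ Finset.univ) => by
    rw [repr_mk hchar hq f hf m, repr_mk hchar hq g hg m])]
  exact Finset.sum_coe_sort (Box n q) (fun m => coeff (tf m) f * coeff (tf m) g)

include hq in
lemma Bfrm_mk_mk (f g : MvPolynomial (Fin n) F)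
    (hf : ∀ j, degreeOf j f < q j) (hg : ∀ j, degreeOf j g < q j) :
    Bfrm hchar hq (Ideal.Quotient.mk (Idl F n q) f) (Ideal.Quotient.mk (Idl F n q) g)
      = ∑ u ∈ f.support, coeff u f * coeff u g := by
  rw [Bfrm_mk_mk_box hchar hq f g hf hg]
  exact sum_box_eq hq (fun u => coeff u f * coeff u g) f hf
    (fun u h => by simp only [h, zero_mul])

include hq in
lemma ee_reduced {m : Fin n → ℕ} (hm : m ∈ Box n q) :
    ∀ j, degreeOf j (∏ j', ((X j' : MvPolynomial (Fin n) F) - 1) ^ m j') < q j := by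
  intro j
  rw [MvPolynomial.degreeOf_lt_iff (hq j)]
  intro u hu
  rw [ee_eq] at hu
  exact lt_of_le_of_lt (support_expand (-1 : F) m hu j) (mem_Box.mp hm j)

lemma coeff_ee (m k : Fin n → ℕ) :
    coeff (tf k) (∏ j, ((X j : MvPolynomial (Fin n) F) - 1) ^ m j)
      = ∏ j, (((m j).choose (k j) : F) * (-1 : F) ^ (m j - k j)) := by
  rw [ee_eq]
  exact coeff_expand (-1 : F) m k

include hchar hq in
lemma Bfrm_ee_ee (t a : Fin n → ℕ) (htB : t ∈ Box n q) (haB : a ∈ Box n q) :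
    Bfrm hchar hq
        (Ideal.Quotient.mk (Idl F n q) (∏ j, (X j - 1) ^ t j))
        (Ideal.Quotient.mk (Idl F n q) (∏ j, (X j - 1) ^ a j))
      = ∏ j, ∑ i ∈ Finset.range (q j),
          (((t j).choose i : F) * (-1 : F) ^ (t j - i))
            * (((a j).choose i : F) * (-1 : F) ^ (a j - i)) := by
  rw [Bfrm_mk_mk_box hchar hq _ _ (ee_reduced hq htB) (ee_reduced hq haB)]
  rw [Finset.sum_congr rfl (fun m (_ : m ∈ Box n q) => by
    rw [coeff_ee t m, coeff_ee a m, ← Finset.prod_mul_distrib])]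
  exact (Finset.prod_univ_sum (fun j => Finset.range (q j))
    (fun j i => (((t j).choose i : F) * (-1 : F) ^ (t j - i))
      * (((a j).choose i : F) * (-1 : F) ^ (a j - i)))).symm

lemma inner_sum_zero {p : ℕ} (hp : p.Prime) [CharP F p] {Q e : ℕ} (hQ : Q = p ^ e)
    {t a : ℕ} (ht : t < Q) (ha : a < Q) (h : Q ≤ t + a) :
    ∑ i ∈ Finset.range Q,
      ((t.choose i : F) * (-1 : F) ^ (t - i)) * ((a.choose i : F) * (-1 : F) ^ (a - i)) = 0 := by
  have hterm : ∀ i, ((t.choose i : F) * (-1 : F) ^ (t - i)) * ((a.choose i : F) * (-1 : F) ^ (a - i))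
      = (-1 : F) ^ (t + a) * ((t.choose i * a.choose i : ℕ) : F) := by
    intro i
    by_cases hit : i ≤ t
    · by_cases hia : i ≤ a
      · have he : t + a = ((t - i) + (a - i)) + 2 * i := by omega
        rw [he, pow_add, pow_mul, neg_one_sq, one_pow, mul_one, pow_add]
        push_cast
        ring
      · rw [Nat.choose_eq_zero_of_lt (by omega : a < i)]
        push_cast
        ring
    · rw [Nat.choose_eq_zero_of_lt (by omega : t < i)]
      push_cast
      ring
  rw [Finset.sum_congr rfl (fun i _ => hterm i), ← Finset.mul_sum, ← Nat.cast_sum]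
  rw [sum_choose_mul t a ha]
  have hz : (((t + a).choose a : ℕ) : F) = 0 := by
    rw [CharP.cast_eq_zero_iff F p]
    exact dvd_choose_pow hp e t a (hQ ▸ ht) (hQ ▸ ha) (hQ ▸ h)
  rw [hz, mul_zero]

end Bilin

section Code

variable {F : Type} [Field F] {n : ℕ} {q : Fin n → ℕ}
variable (hchar : ∀ j, ((X j : MvPolynomial (Fin n) F) - 1) ^ q j = X j ^ q j - 1)
variable (hq : ∀ j, 0 < q j)

lemma ee_factor {N m : Fin n → ℕ} (hNm : ∀ j, N j ≤ m j) :
    (∏ j, ((X j : MvPolynomial (Fin n) F) - 1) ^ m j)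
      = (∏ j, ((X j : MvPolynomial (Fin n) F) - 1) ^ (m j - N j))
        * ∏ j, ((X j : MvPolynomial (Fin n) F) - 1) ^ N j := by
  rw [← Finset.prod_mul_distrib]
  refine Finset.prod_congr rfl fun j _ => ?_
  rw [← pow_add, Nat.sub_add_cancel (hNm j)]

lemma ee_mul (m m' : Fin n → ℕ) :
    (∏ j, ((X j : MvPolynomial (Fin n) F) - 1) ^ m j)
      * (∏ j, ((X j : MvPolynomial (Fin n) F) - 1) ^ m' j)
      = ∏ j, ((X j : MvPolynomial (Fin n) F) - 1) ^ (m j + m' j) := by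
  rw [← Finset.prod_mul_distrib]
  exact Finset.prod_congr rfl fun j _ => (pow_add _ _ _).symm

include hchar in
lemma ee_mem_Idl {m : Fin n → ℕ} {j0 : Fin n} (hj0 : q j0 ≤ m j0) :
    (∏ j, ((X j : MvPolynomial (Fin n) F) - 1) ^ m j) ∈ Idl F n q := by
  rw [← Finset.mul_prod_erase Finset.univ _ (Finset.mem_univ j0)]
  rw [show ((X j0 : MvPolynomial (Fin n) F) - 1) ^ m j0
      = ((X j0 : MvPolynomial (Fin n) F) ^ q j0 - 1)
        * ((X j0 : MvPolynomial (Fin n) F) - 1) ^ (m j0 - q j0) from by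
    rw [← hchar j0, ← pow_add, Nat.add_sub_cancel' hj0]]
  rw [mul_assoc]
  exact Ideal.mul_mem_right _ _ (Ideal.subset_span ⟨j0, rfl⟩)

/-- the sub-box of exponents that are `≥ N` everywhere -/
def CSet (n : ℕ) (q N : Fin n → ℕ) : Finset (Fin n → ℕ) :=
  (Box n q).filter (fun m => ∀ j, N j ≤ m j)

variable (N : Fin n → ℕ)

include hchar hq in
lemma C_eq_span (hN : ∀ j, N j ≤ q j) :
    Submodule.restrictScalars F
        (Ideal.span {Ideal.Quotient.mk (Idl F n q) (∏ j, (X j - 1) ^ N j)})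
      = Submodule.span F (Set.range (fun m : ↥(CSet n q N) =>
          Ideal.Quotient.mk (Idl F n q) (∏ j, (X j - 1) ^ (m.1 j)))) := by
  apply le_antisymm
  · intro u hu
    obtain ⟨r, hr⟩ := Ideal.mem_span_singleton'.mp hu
    have hrr := Module.Basis.sum_repr (basisE hchar) r
    rw [← hr, ← hrr, Finset.sum_mul]
    refine Submodule.sum_mem _ fun m _ => ?_
    rw [smul_mul_assoc]
    refine Submodule.smul_mem _ _ ?_
    rw [basisE_apply, ← map_mul, ee_mul]
    by_cases hb : ∀ j, m.1 j + N j < q j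
    · refine Submodule.subset_span ⟨⟨fun j => m.1 j + N j, ?_⟩, rfl⟩
      rw [CSet, Finset.mem_filter]
      exact ⟨mem_Box.mpr hb, fun j => Nat.le_add_left _ _⟩
    · push_neg at hb
      obtain ⟨j0, hj0⟩ := hb
      rw [Ideal.Quotient.eq_zero_iff_mem.mpr (ee_mem_Idl hchar hj0)]
      exact Submodule.zero_mem _
  · rw [Submodule.span_le]
    rintro _ ⟨m, rfl⟩
    have hm := Finset.mem_filter.mp m.2
    show Ideal.Quotient.mk (Idl F n q) (∏ j, (X j - 1) ^ (m.1 j)) ∈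
      Ideal.span {Ideal.Quotient.mk (Idl F n q) (∏ j, (X j - 1) ^ N j)}
    refine Ideal.mem_span_singleton'.mpr
      ⟨Ideal.Quotient.mk (Idl F n q) (∏ j, (X j - 1) ^ (m.1 j - N j)), ?_⟩
    rw [← map_mul, ← ee_factor hm.2]

lemma CSet_card : (CSet n q N).card = ∏ j, (q j - N j) := by
  have h1 : CSet n q N = Fintype.piFinset (fun j => Finset.Ico (N j) (q j)) := by
    ext a
    rw [CSet, Finset.mem_filter, Fintype.mem_piFinset]
    simp only [mem_Box, Finset.mem_Ico]
    constructor
    · rintro ⟨h1, h2⟩ j; exact ⟨h2 j, h1 j⟩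
    · intro h; exact ⟨fun j => (h j).2, fun j => (h j).1⟩
  rw [h1, Fintype.card_piFinset]
  simp [Nat.card_Ico]

lemma T_card (hN : ∀ j, N j ≤ q j) :
    ((Box n q).filter (fun a => ∃ j, q j - N j ≤ a j)).card
      = ∏ j, q j - ∏ j, (q j - N j) := by
  classical
  have hneg : (Box n q).filter (fun a => ¬ ∃ j, q j - N j ≤ a j)
      = Fintype.piFinset (fun j => Finset.range (q j - N j)) := by
    ext a
    rw [Finset.mem_filter, Fintype.mem_piFinset]
    simp only [mem_Box, not_exists, not_le, Finset.mem_range]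
    constructor
    · rintro ⟨_, h2⟩ j; exact h2 j
    · intro h; exact ⟨fun j => lt_of_lt_of_le (h j) (Nat.sub_le _ _), h⟩
  have h2 := Finset.card_filter_add_card_filter_not
    (s := Box n q) (p := fun a => ∃ j, q j - N j ≤ a j)
  rw [hneg, card_box, Fintype.card_piFinset] at h2
  simp only [Finset.card_range] at h2
  rw [← h2]
  exact (Nat.add_sub_cancel _ _).symm

include hchar hq in
lemma exists_reduced (u : MvPolynomial (Fin n) F ⧸ Idl F n q) :
    ∃ f : MvPolynomial (Fin n) F,
      (∀ j, degreeOf j f < q j) ∧ Ideal.Quotient.mk (Idl F n q) f = u := by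
  classical
  refine ⟨∑ m : ↥(Box n q), ((basisMu hchar hq).repr u m) • monomial (tf m.1) (1 : F), ?_, ?_⟩
  · intro j
    rw [MvPolynomial.degreeOf_lt_iff (hq j)]
    intro k hk
    obtain ⟨m, hm, hk'⟩ := Finset.mem_biUnion.mp (MvPolynomial.support_sum hk)
    have h2 : k ∈ (monomial (tf m.1) (1 : F)).support := MvPolynomial.support_smul hk'
    rw [MvPolynomial.support_monomial, if_neg one_ne_zero, Finset.mem_singleton] at h2
    subst h2
    rw [tf_apply]
    exact mem_Box.mp m.2 j
  · rw [show Ideal.Quotient.mk (Idl F n q) = ⇑(Ideal.Quotient.mkₐ F (Idl F n q)) from rfl,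
      map_sum]
    have h1 : ∀ m : ↥(Box n q),
        (Ideal.Quotient.mkₐ F (Idl F n q)) (((basisMu hchar hq).repr u m) • monomial (tf m.1) (1 : F))
          = ((basisMu hchar hq).repr u m) • basisMu hchar hq m := by
      intro m
      rw [map_smul, basisMu_apply]
      rfl
    rw [Finset.sum_congr rfl (fun m _ => h1 m)]
    exact Module.Basis.sum_repr _ u

end Code

section Dual

variable {F : Type} [Field F] {n : ℕ} {q : Fin n → ℕ}
variable (hchar : ∀ j, ((X j : MvPolynomial (Fin n) F) - 1) ^ q j = X j ^ q j - 1)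
variable (hq : ∀ j, 0 < q j)

/-- the index set of the dual basis -/
def TSet (n : ℕ) (q N : Fin n → ℕ) : Finset (Fin n → ℕ) :=
  (Box n q).filter (fun a => ∃ j, q j - N j ≤ a j)

include hchar hq in
lemma fam_indep {S : Finset (Fin n → ℕ)} (hS : S ⊆ Box n q) :
    LinearIndependent F (fun m : ↥S =>
      Ideal.Quotient.mk (Idl F n q) (∏ j, (X j - 1) ^ (m.1 j))) := by
  have he : (fun m : ↥S => Ideal.Quotient.mk (Idl F n q) (∏ j, (X j - 1) ^ (m.1 j)))
      = (basisE hchar (q := q)) ∘ (fun m : ↥S => (⟨m.1, hS m.2⟩ : ↥(Box n q))) := by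
    funext m
    rw [Function.comp_apply, basisE_apply]
  rw [he]
  exact (basisE hchar).linearIndependent.comp _
    (fun x y h => Subtype.ext (by simpa using congrArg Subtype.val h))

variable {p : ℕ} (hp : p.Prime) [CharP F p] {s : Fin n → ℕ} (hqdef : ∀ j, q j = p ^ s j)
variable (N : Fin n → ℕ) (hN : ∀ j, N j ≤ q j)

include hchar hq hp hqdef hN in
lemma span_eq_orth :
    Submodule.span F (Set.range (fun a : ↥(TSet n q N) =>
        Ideal.Quotient.mk (Idl F n q) (∏ j, (X j - 1) ^ (a.1 j))))
      = (Bfrm hchar hq).orthogonal (Submodule.restrictScalars F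
          (Ideal.span {Ideal.Quotient.mk (Idl F n q) (∏ j, (X j - 1) ^ N j)})) := by
  classical
  haveI : FiniteDimensional F (MvPolynomial (Fin n) F ⧸ Idl F n q) :=
    Module.Finite.of_basis (basisE hchar)
  have key : ∀ m ∈ CSet n q N, ∀ a ∈ TSet n q N,
      Bfrm hchar hq (Ideal.Quotient.mk (Idl F n q) (∏ j, (X j - 1) ^ (m j)))
        (Ideal.Quotient.mk (Idl F n q) (∏ j, (X j - 1) ^ (a j))) = 0 := by
    intro m hm a ha
    have hm' := Finset.mem_filter.mp hm
    have ha' := Finset.mem_filter.mp ha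
    obtain ⟨j0, hj0⟩ := ha'.2
    rw [Bfrm_ee_ee hchar hq m a hm'.1 ha'.1]
    refine Finset.prod_eq_zero (Finset.mem_univ j0) ?_
    exact inner_sum_zero hp (hqdef j0) (mem_Box.mp hm'.1 j0) (mem_Box.mp ha'.1 j0)
      (by have h1 := hm'.2 j0; have h2 := hN j0; omega)
  have hle : Submodule.span F (Set.range (fun a : ↥(TSet n q N) =>
        Ideal.Quotient.mk (Idl F n q) (∏ j, (X j - 1) ^ (a.1 j))))
      ≤ (Bfrm hchar hq).orthogonal (Submodule.restrictScalars F
          (Ideal.span {Ideal.Quotient.mk (Idl F n q) (∏ j, (X j - 1) ^ N j)})) := by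
    rw [Submodule.span_le]
    rintro _ ⟨a, rfl⟩
    rw [SetLike.mem_coe, LinearMap.BilinForm.mem_orthogonal_iff]
    intro u hu
    rw [Submodule.restrictScalars_mem, ← Submodule.restrictScalars_mem F,
      C_eq_span hchar hq N hN] at hu
    show Bfrm hchar hq u (Ideal.Quotient.mk (Idl F n q) (∏ j, (X j - 1) ^ (a.1 j))) = 0
    induction hu using Submodule.span_induction with
    | mem x hx =>
      obtain ⟨m, rfl⟩ := hx
      exact key m.1 m.2 a.1 a.2
    | zero => rw [map_zero, LinearMap.zero_apply]
    | add x y _ _ hx hy => rw [map_add, LinearMap.add_apply, hx, hy, add_zero]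
    | smul c x _ hx => rw [map_smul, LinearMap.smul_apply, hx, smul_zero]
  have hfr1 : Module.finrank F ((Bfrm hchar hq).orthogonal (Submodule.restrictScalars F
      (Ideal.span {Ideal.Quotient.mk (Idl F n q) (∏ j, (X j - 1) ^ N j)})))
      = ∏ j, q j - ∏ j, (q j - N j) := by
    rw [LinearMap.BilinForm.finrank_orthogonal (Bfrm_nondeg hchar hq),
      finrank_R hchar, C_eq_span hchar hq N hN]
    congr 1
    rw [finrank_span_eq_card (fam_indep hchar hq (S := CSet n q N) (Finset.filter_subset _ _)),
      Fintype.card_coe, CSet_card]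
  have hfr2 : Module.finrank F (Submodule.span F (Set.range (fun a : ↥(TSet n q N) =>
        Ideal.Quotient.mk (Idl F n q) (∏ j, (X j - 1) ^ (a.1 j)))))
      = ∏ j, q j - ∏ j, (q j - N j) := by
    rw [finrank_span_eq_card (fam_indep hchar hq (S := TSet n q N) (Finset.filter_subset _ _)),
      Fintype.card_coe]
    exact T_card N hN
  exact Submodule.eq_of_le_of_finrank_le hle (le_of_eq (hfr1.trans hfr2.symm))

end Dual

end Stmt11

open Stmt11 in
/-- For the monomial-like code `C = ⟨(x₁−1)^{N₁}⋯(x_n−1)^{N_n}⟩ ⊆ F_q[x]/⟨x_j^{p^{s_j}}−1⟩`,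
with `T = {a : 0 ≤ a_j < p^{s_j}, and p^{s_j} − N_j ≤ a_j for some j}`, we have
`|T| = p^{s₁}⋯p^{s_n} − (p^{s₁}−N₁)⋯(p^{s_n}−N_n)`, and the family
`B = {(x₁−1)^{a₁}⋯(x_n−1)^{a_n} : a ∈ T}` is an `F_q`-basis of the Euclidean dual `C^⊥`
(i.e. it is linearly independent and its span consists exactly of the classes orthogonal
to every codeword of `C`). -/
theorem stmt_11 (p : ℕ) (hp : p.Prime) (F : Type) [Field F] [Fintype F] [CharP F p]
    (n : ℕ) (s N : Fin n → ℕ) (hs : ∀ j, 0 < s j) (hN : ∀ j, N j ≤ p ^ s j)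
    (I : Ideal (MvPolynomial (Fin n) F))
    (hI : I = Ideal.span (Set.range fun j : Fin n => X j ^ p ^ s j - 1))
    (C : Ideal (MvPolynomial (Fin n) F ⧸ I))
    (hC : C = Ideal.span {Ideal.Quotient.mk I (∏ j : Fin n, (X j - 1) ^ N j)})
    (T : Finset (Fin n → ℕ))
    (hT : T = (Fintype.piFinset fun j : Fin n => Finset.range (p ^ s j)).filter
      (fun a => ∃ j, p ^ s j - N j ≤ a j))
    (b : T → MvPolynomial (Fin n) F ⧸ I)
    (hb : ∀ a : T, b a = Ideal.Quotient.mk I (∏ j : Fin n, (X j - 1) ^ (a.1 j))) :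
    T.card = ∏ j : Fin n, p ^ s j - ∏ j : Fin n, (p ^ s j - N j) ∧
    LinearIndependent F b ∧
    (∀ g : MvPolynomial (Fin n) F, (∀ j, degreeOf j g < p ^ s j) →
      (Ideal.Quotient.mk I g ∈ Submodule.span F (Set.range b) ↔
        ∀ f : MvPolynomial (Fin n) F, (∀ j, degreeOf j f < p ^ s j) →
          Ideal.Quotient.mk I f ∈ C →
            ∑ m ∈ f.support, coeff m f * coeff m g = 0)) := by
  classical
  haveI := Fact.mk hp
  have hq : ∀ j, 0 < (fun j : Fin n => p ^ s j) j := fun j => pow_pos hp.pos _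
  have hqd : ∀ j, (fun j : Fin n => p ^ s j) j = p ^ s j := fun _ => rfl
  have hchar : ∀ j, ((X j : MvPolynomial (Fin n) F) - 1) ^ (fun j : Fin n => p ^ s j) j
      = X j ^ (fun j : Fin n => p ^ s j) j - 1 := by
    intro j
    have h := sub_pow_char_pow (R := MvPolynomial (Fin n) F) (p := p)
      (x := (X j : MvPolynomial (Fin n) F)) (y := 1) (n := s j)
    rwa [one_pow] at h
  have hIdl : I = Idl F n (fun j => p ^ s j) := hI
  subst hIdl
  have hTset : T = TSet n (fun j => p ^ s j) N := hT
  subst hTset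
  have hbfun : b = fun a : ↥(TSet n (fun j => p ^ s j) N) =>
      Ideal.Quotient.mk (Idl F n (fun j => p ^ s j)) (∏ j, (X j - 1) ^ (a.1 j)) :=
    funext hb
  refine ⟨T_card N hN, ?_, ?_⟩
  · rw [hbfun]
    exact fam_indep hchar hq (S := TSet n (fun j => p ^ s j) N) (Finset.filter_subset _ _)
  · intro g hg
    have hspan : Submodule.span F (Set.range b)
        = (Bfrm hchar hq).orthogonal (Submodule.restrictScalars F
            (Ideal.span {Ideal.Quotient.mk (Idl F n (fun j => p ^ s j))
              (∏ j, (X j - 1) ^ N j)})) := by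
      rw [hbfun]
      exact span_eq_orth hchar hq hp hqd N hN
    rw [hspan]
    constructor
    · intro hmem f hf hfC
      have h2 := LinearMap.BilinForm.mem_orthogonal_iff.mp hmem
        (Ideal.Quotient.mk (Idl F n (fun j => p ^ s j)) f)
        (by rw [Submodule.restrictScalars_mem, ← hC]; exact hfC)
      rw [← Bfrm_mk_mk hchar hq f g hf hg]
      exact h2
    · intro hsum
      rw [LinearMap.BilinForm.mem_orthogonal_iff]
      intro u hu
      obtain ⟨f, hf, rfl⟩ := exists_reduced hchar hq u
      show Bfrm hchar hq _ _ = 0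
      rw [Bfrm_mk_mk hchar hq f g hf hg]
      refine hsum f hf ?_
      rw [hC]
      exact (Submodule.restrictScalars_mem _ _ _).mp hu
end

section
/- Let p be a prime, F_q a finite field of characteristic p, and let i, k be integers with 0 ≤ i < p and k ≥ 1. Let C = ⟨(x − 1)^i⟩ ⊆ F_q[x]/⟨x^p − 1⟩ and let D be a k-dimensional F_q-subspace of C. Then |χ(D)| > i + k − 1, where χ(D) is the support of D. -/
set_option synthInstance.maxHeartbeats 1000000

open Polynomial

section Aux

variable {F : Type} [Field F]

/-- The operator `θ q = X * q'`. -/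
noncomputable def stmt12Theta (q : F[X]) : F[X] := X * derivative q

lemma stmt12_coeff_theta (q : F[X]) (j : ℕ) :
    (stmt12Theta q).coeff j = (j : F) * q.coeff j := by
  cases j with
  | zero => simp [stmt12Theta]
  | succ n =>
      rw [stmt12Theta, coeff_X_mul, coeff_derivative]
      push_cast; ring

lemma stmt12_coeff_theta_iter (q : F[X]) (m j : ℕ) :
    (stmt12Theta^[m] q).coeff j = (j : F) ^ m * q.coeff j := by
  induction m generalizing q with
  | zero => simp
  | succ n ih =>
      rw [Function.iterate_succ_apply, ih, stmt12_coeff_theta, pow_succ]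
      ring

lemma stmt12_dvd_theta {s : ℕ} {q : F[X]} (h : ((X : F[X]) - 1) ^ s ∣ q) :
    ((X : F[X]) - 1) ^ (s - 1) ∣ stmt12Theta q := by
  obtain ⟨r, rfl⟩ := h
  cases s with
  | zero => simpa using one_dvd _
  | succ n =>
      rw [stmt12Theta, derivative_mul, derivative_pow]
      simp only [derivative_sub, derivative_X, derivative_one, sub_zero, mul_one,
        Nat.add_sub_cancel]
      apply Dvd.dvd.mul_left
      exact dvd_add (((dvd_refl ((X-1:F[X])^n)).mul_left _).mul_right _)
        (((dvd_refl ((X-1:F[X])^n)).mul_right _).mul_right _)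

lemma stmt12_dvd_theta_iter {i : ℕ} {q : F[X]} (h : ((X : F[X]) - 1) ^ i ∣ q) (m : ℕ) :
    ((X : F[X]) - 1) ^ (i - m) ∣ stmt12Theta^[m] q := by
  induction m generalizing q i with
  | zero => simpa using h
  | succ n ih =>
      rw [Function.iterate_succ_apply]
      have := ih (stmt12_dvd_theta h)
      rwa [show i - 1 - n = i - (n + 1) by omega] at this

lemma stmt12_natDegree_theta_iter_le (g : F[X]) (m : ℕ) :
    (stmt12Theta^[m] g).natDegree ≤ g.natDegree := by
  rw [Polynomial.natDegree_le_iff_coeff_eq_zero]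
  intro j hj
  rw [stmt12_coeff_theta_iter, Polynomial.coeff_eq_zero_of_natDegree_lt hj, mul_zero]

/-- A nonzero polynomial of degree `< p` divisible by `(X-1)^i` has at least `i+1`
nonzero coefficients. -/
lemma stmt12_base_min_weight {p : ℕ} [CharP F p] {i : ℕ} {g : F[X]} (hg : g ≠ 0)
    (hdeg : g.natDegree < p) (hdvd : ((X : F[X]) - 1) ^ i ∣ g) :
    i + 1 ≤ g.support.card := by
  by_contra hcon
  push_neg at hcon
  set w := g.support.card with hw
  have hw1 : 1 ≤ w := Finset.card_pos.2 (Polynomial.support_nonempty.2 hg)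
  have hwi : w ≤ i := by omega
  have hsub : g.support ⊆ Finset.range p := fun j hj => Finset.mem_range.2
    (lt_of_le_of_lt (Polynomial.le_natDegree_of_mem_supp j hj) hdeg)
  have key : ∀ m < w, ∑ j ∈ Finset.range p, (j : F) ^ m * g.coeff j = 0 := by
    intro m hm
    have h1 : ((X : F[X]) - 1) ∣ stmt12Theta^[m] g := by
      have := stmt12_dvd_theta_iter hdvd m
      exact dvd_trans (by simpa using pow_dvd_pow ((X : F[X]) - 1) (show 1 ≤ i - m by omega)) this
    have h2 : (stmt12Theta^[m] g).eval 1 = 0 := by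
      have : ((X : F[X]) - C 1) ∣ stmt12Theta^[m] g := by simpa using h1
      exact (Polynomial.dvd_iff_isRoot.1 this)
    have h3 : (stmt12Theta^[m] g).natDegree < p :=
      lt_of_le_of_lt (stmt12_natDegree_theta_iter_le g m) hdeg
    rw [Polynomial.eval_eq_sum_range' h3] at h2
    simpa [stmt12_coeff_theta_iter] using h2
  obtain ⟨j0, hj0⟩ := Polynomial.support_nonempty.2 hg
  set P : F[X] := ∏ j ∈ g.support.erase j0, (X - C (j : F)) with hP
  have hPdeg : P.natDegree = w - 1 := by
    rw [hP, Polynomial.natDegree_prod_of_monic _ _ (fun j _ => Polynomial.monic_X_sub_C _)]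
    simp only [Polynomial.natDegree_X_sub_C]
    simp [Finset.card_erase_of_mem hj0, hw]
  have hPdeg' : P.natDegree < w := by omega
  have key2 : ∑ j ∈ Finset.range p, P.eval (j : F) * g.coeff j = 0 := by
    have : ∀ j : ℕ, P.eval (j : F) = ∑ m ∈ Finset.range w, P.coeff m * (j : F) ^ m :=
      fun j => Polynomial.eval_eq_sum_range' hPdeg' _
    calc ∑ j ∈ Finset.range p, P.eval (j : F) * g.coeff j
        = ∑ j ∈ Finset.range p, ∑ m ∈ Finset.range w, P.coeff m * ((j : F) ^ m * g.coeff j) := by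
          refine Finset.sum_congr rfl fun j _ => ?_
          rw [this j, Finset.sum_mul]
          exact Finset.sum_congr rfl fun m _ => by ring
      _ = ∑ m ∈ Finset.range w, P.coeff m * ∑ j ∈ Finset.range p, (j : F) ^ m * g.coeff j := by
          rw [Finset.sum_comm]
          exact Finset.sum_congr rfl fun m _ => by rw [Finset.mul_sum]
      _ = 0 := Finset.sum_eq_zero fun m hm => by
          rw [key m (Finset.mem_range.1 hm), mul_zero]
  have key3 : ∑ j ∈ g.support, P.eval (j : F) * g.coeff j = 0 := by
    rw [← key2]
    exact (Finset.sum_subset hsub fun j _ hj => by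
      rw [Polynomial.notMem_support_iff.1 hj, mul_zero])
  have key4 : P.eval (j0 : F) * g.coeff j0 = 0 := by
    rw [← key3]
    refine (Finset.sum_eq_single_of_mem (f := fun j : ℕ => P.eval (j : F) * g.coeff j)
      j0 hj0 fun j hj hne => ?_).symm
    have hz : P.eval (j : F) = 0 := by
      rw [hP, Polynomial.eval_prod]
      exact Finset.prod_eq_zero (Finset.mem_erase.2 ⟨hne, hj⟩) (by simp)
    show P.eval (j : F) * g.coeff j = 0
    rw [hz, zero_mul]
  have hPj0 : P.eval (j0 : F) = 0 := by
    rcases mul_eq_zero.1 key4 with h | h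
    · exact h
    · exact absurd h (Polynomial.mem_support_iff.1 hj0)
  rw [hP, Polynomial.eval_prod] at hPj0
  obtain ⟨j, hj, hj2⟩ := Finset.prod_eq_zero_iff.1 hPj0
  have hjj0 : (j : F) = (j0 : F) := by
    have : (j0 : F) - (j : F) = 0 := by simpa using hj2
    exact (sub_eq_zero.1 this).symm
  have hjlt : j < p := Finset.mem_range.1 (hsub (Finset.mem_of_mem_erase hj))
  have hj0lt : j0 < p := Finset.mem_range.1 (hsub hj0)
  have : j = j0 := CharP.natCast_injOn_Iio F p hjlt hj0lt hjj0
  exact (Finset.mem_erase.1 hj).1 this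

/-- Support-size induction for subspaces: if every nonzero element of `D` has at least `i+1`
nonzero coordinates, then a `k`-dimensional `D` has support of size at least `i + k`. -/
lemma stmt12_supp_ind {M : Type} [AddCommGroup M] [Module F M]
    [FiniteDimensional F M] {n : ℕ} (v : M →ₗ[F] (Fin n → F)) (i : ℕ) :
    ∀ k : ℕ, 1 ≤ k → ∀ D : Submodule F M, Module.finrank F D = k →
      (∀ z ∈ D, z ≠ 0 → i + 1 ≤ Set.ncard {t : Fin n | v z t ≠ 0}) →
      i + k ≤ Set.ncard {t : Fin n | ∃ z ∈ D, v z t ≠ 0} := by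
  intro k
  induction k with
  | zero => omega
  | succ k ih =>
    intro _ D hD hmin
    have hDbot : D ≠ ⊥ := by
      intro h
      rw [h] at hD
      simp [finrank_bot F M] at hD
    obtain ⟨z0, hz0D, hz0⟩ := Submodule.ne_bot_iff D |>.1 hDbot
    have hz0w := hmin z0 hz0D hz0
    have hz0ne : {t : Fin n | v z0 t ≠ 0}.Nonempty := by
      rw [Set.nonempty_iff_ne_empty]
      intro h
      rw [h] at hz0w
      simp at hz0w
    obtain ⟨t0, ht0⟩ := hz0ne
    have hsub0 : {t : Fin n | v z0 t ≠ 0} ⊆ {t : Fin n | ∃ z ∈ D, v z t ≠ 0} :=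
      fun t ht => ⟨z0, hz0D, ht⟩
    by_cases hk : k = 0
    · subst hk
      calc i + 1 ≤ Set.ncard {t : Fin n | v z0 t ≠ 0} := hz0w
        _ ≤ _ := Set.ncard_le_ncard hsub0 (Set.toFinite _)
    · set φ : D →ₗ[F] F := (LinearMap.proj t0) ∘ₗ v ∘ₗ D.subtype with hφ
      have hφz0 : φ ⟨z0, hz0D⟩ ≠ 0 := ht0
      have hrange : LinearMap.range φ = ⊤ := by
        apply Ideal.eq_top_of_isUnit_mem _ (⟨⟨z0, hz0D⟩, rfl⟩ : φ ⟨z0, hz0D⟩ ∈ LinearMap.range φ)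
        exact isUnit_iff_ne_zero.2 hφz0
      have hker : Module.finrank F (LinearMap.ker φ) = k := by
        have := LinearMap.finrank_range_add_finrank_ker φ
        rw [hrange, finrank_top, Module.finrank_self, hD] at this
        omega
      set D' : Submodule F M := Submodule.map D.subtype (LinearMap.ker φ) with hD'
      have hD'le : D' ≤ D := Submodule.map_subtype_le D _
      have hD'rank : Module.finrank F D' = k := by
        rw [← hker]
        exact (Submodule.equivMapOfInjective D.subtype (Submodule.injective_subtype D)
          (LinearMap.ker φ)).finrank_eq.symm
      have hmin' : ∀ z ∈ D', z ≠ 0 → i + 1 ≤ Set.ncard {t : Fin n | v z t ≠ 0} :=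
        fun z hz => hmin z (hD'le hz)
      have hIH := ih (by omega) D' hD'rank hmin'
      have ht0D : t0 ∈ {t : Fin n | ∃ z ∈ D, v z t ≠ 0} := ⟨z0, hz0D, ht0⟩
      have hsubset : {t : Fin n | ∃ z ∈ D', v z t ≠ 0} ⊆
          {t : Fin n | ∃ z ∈ D, v z t ≠ 0} \ {t0} := by
        rintro t ⟨z, hzD', hzt⟩
        refine ⟨⟨z, hD'le hzD', hzt⟩, ?_⟩
        simp only [Set.mem_singleton_iff]
        rintro rfl
        obtain ⟨⟨z', hz'D⟩, hz'ker, rfl⟩ := hzD'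
        exact hzt (by simpa [hφ] using hz'ker)
      have h1 : i + k ≤ Set.ncard ({t : Fin n | ∃ z ∈ D, v z t ≠ 0} \ {t0}) :=
        le_trans hIH (Set.ncard_le_ncard hsubset (Set.toFinite _))
      have h2 := Set.ncard_diff_singleton_add_one ht0D (Set.toFinite _)
      omega

/-- Converting the cardinality of the polynomial support to the `Fin p` indexed set. -/
lemma stmt12_card_le_ncard {p : ℕ} (hp0 : 0 < p) (g : F[X]) (hdeg : g.natDegree < p) :
    g.support.card ≤ Set.ncard {t : Fin p | g.coeff (t : ℕ) ≠ 0} := by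
  classical
  have hset : {t : Fin p | g.coeff (t : ℕ) ≠ 0} =
      ↑(Finset.univ.filter fun t : Fin p => g.coeff (t : ℕ) ≠ 0) := by
    ext t; simp
  rw [hset, Set.ncard_coe_finset]
  refine Finset.card_le_card_of_injOn (fun j => (⟨j % p, Nat.mod_lt _ hp0⟩ : Fin p)) ?_ ?_
  · intro j hj
    have hjp : j < p := lt_of_le_of_lt (Polynomial.le_natDegree_of_mem_supp j hj) hdeg
    simp only [Finset.mem_filter, Finset.mem_univ, true_and]
    simpa [Nat.mod_eq_of_lt hjp] using Polynomial.mem_support_iff.1 hj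
  · intro a ha b hb hab
    have hap : a < p := lt_of_le_of_lt (Polynomial.le_natDegree_of_mem_supp a ha) hdeg
    have hbp : b < p := lt_of_le_of_lt (Polynomial.le_natDegree_of_mem_supp b hb) hdeg
    have := congrArg Fin.val hab
    simpa [Nat.mod_eq_of_lt hap, Nat.mod_eq_of_lt hbp] using this

end Aux

/-- If `D` is a `k`-dimensional (`k ≥ 1`) `F_q`-subspace of the code
`C = ⟨(x−1)^i⟩ ⊆ F_q[x]/⟨x^p − 1⟩` (with `0 ≤ i < p`), then the support of `D` has more than
`i + k − 1` coordinates. Elements of the quotient are identified with the length-`p`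
coefficient vectors of their unique representatives of degree `< p`. -/
theorem stmt_12 (p : ℕ) (hp : p.Prime) (F : Type) [Field F] [Fintype F] [CharP F p]
    (i k : ℕ) (hi : i < p) (hk : 1 ≤ k)
    (I : Ideal (Polynomial F)) (hI : I = Ideal.span {Polynomial.X ^ p - 1})
    (C : Ideal (Polynomial F ⧸ I))
    (hC : C = Ideal.span {Ideal.Quotient.mk I ((Polynomial.X - 1) ^ i)})
    (D : Submodule F (Polynomial F ⧸ I))
    (hDC : D ≤ Submodule.restrictScalars F C)
    (hDk : Module.finrank F D = k) :
    i + k - 1 < Set.ncard {t : Fin p | ∃ g : Polynomial F, g.natDegree < p ∧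
      Ideal.Quotient.mk I g ∈ D ∧ g.coeff (t : ℕ) ≠ 0} := by
  classical
  have hfact : Fact p.Prime := ⟨hp⟩
  subst hI hC
  have hp0 : p ≠ 0 := hp.ne_zero
  have hmonic : (X ^ p - 1 : F[X]).Monic := by
    have := Polynomial.monic_X_pow_sub_C (1 : F) hp0
    simpa using this
  let f : F[X] := X ^ p - 1
  have hf : f = X ^ p - 1 := rfl
  -- the char-p factorization f = (X-1)^p
  have hfact_f : f = ((X : F[X]) - 1) ^ p := by
    rw [hf, sub_pow_char, one_pow]
  -- the representative map
  let V : (F[X] ⧸ Ideal.span {f}) →ₗ[F] F[X] := AdjoinRoot.modByMonicHom hmonic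
  have hVmk : ∀ g : F[X], V (Ideal.Quotient.mk (Ideal.span {f}) g) = g %ₘ f := fun g =>
    AdjoinRoot.modByMonicHom_mk hmonic g
  have hmkV : ∀ z : F[X] ⧸ Ideal.span {f}, Ideal.Quotient.mk (Ideal.span {f}) (V z) = z :=
    fun z => AdjoinRoot.mk_leftInverse hmonic z
  have hdegV : ∀ z, (V z).natDegree < p := by
    intro z
    obtain ⟨g, rfl⟩ := Ideal.Quotient.mk_surjective z
    rw [hVmk]
    by_cases h : g %ₘ f = 0
    · rw [h]; simpa using hp.pos
    · have := Polynomial.degree_modByMonic_lt g hmonic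
      rw [Polynomial.natDegree_lt_iff_degree_lt h]
      have hdf : f.degree = p := by
        rw [hf, ← Polynomial.C_1, Polynomial.degree_X_pow_sub_C hp.pos]
      rwa [hdf] at this
  have hfin : FiniteDimensional F (F[X] ⧸ Ideal.span {f}) := by
    have hf0 : f ≠ 0 := hmonic.ne_zero
    exact Module.Finite.of_basis (AdjoinRoot.powerBasis hf0).basis
  -- representative of a nonzero element is nonzero
  have hVne : ∀ z : F[X] ⧸ Ideal.span {f}, z ≠ 0 → V z ≠ 0 := by
    intro z hz h
    apply hz
    rw [← hmkV z, h, map_zero]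
  -- representatives of code elements are divisible by (X-1)^i
  have hVdvd : ∀ z ∈ Ideal.span {Ideal.Quotient.mk (Ideal.span {f}) (((X : F[X]) - 1) ^ i)},
      ((X : F[X]) - 1) ^ i ∣ V z := by
    intro z hz
    obtain ⟨a, ha⟩ := Ideal.mem_span_singleton'.1 hz
    obtain ⟨h, rfl⟩ := Ideal.Quotient.mk_surjective a
    rw [← map_mul] at ha
    rw [← ha, hVmk, Polynomial.modByMonic_eq_sub_mul_div _ f]
    refine dvd_sub (dvd_mul_left _ _) ?_
    refine Dvd.dvd.mul_right ?_ _
    rw [hf, show (X : F[X]) ^ p - 1 = ((X : F[X]) - 1) ^ p by rw [sub_pow_char, one_pow]]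
    exact pow_dvd_pow _ (le_of_lt hi)
  -- the coordinate map
  let v : (F[X] ⧸ Ideal.span {f}) →ₗ[F] (Fin p → F) :=
    (LinearMap.pi fun t : Fin p => Polynomial.lcoeff F (t : ℕ)) ∘ₗ V
  have hv : ∀ z (t : Fin p), v z t = (V z).coeff (t : ℕ) := fun z t => rfl
  -- identify the support set
  have hsets : {t : Fin p | ∃ g : Polynomial F, g.natDegree < p ∧
      Ideal.Quotient.mk (Ideal.span {f}) g ∈ D ∧ g.coeff (t : ℕ) ≠ 0} =
      {t : Fin p | ∃ z ∈ D, v z t ≠ 0} := by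
    ext t
    constructor
    · rintro ⟨g, hgdeg, hgD, hgt⟩
      refine ⟨Ideal.Quotient.mk (Ideal.span {f}) g, hgD, ?_⟩
      rw [hv, hVmk]
      have : g %ₘ f = g := by
        rw [Polynomial.modByMonic_eq_self_iff hmonic]
        have hdf : f.degree = p := by
          rw [hf, ← Polynomial.C_1, Polynomial.degree_X_pow_sub_C hp.pos]
        rw [hdf]
        exact lt_of_le_of_lt Polynomial.degree_le_natDegree (by exact_mod_cast hgdeg)
      rwa [this]
    · rintro ⟨z, hzD, hzt⟩
      exact ⟨V z, hdegV z, by rwa [hmkV], by rwa [hv] at hzt⟩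
  show i + k - 1 < Set.ncard {t : Fin p | ∃ g : Polynomial F, g.natDegree < p ∧
      Ideal.Quotient.mk (Ideal.span {f}) g ∈ D ∧ g.coeff (t : ℕ) ≠ 0}
  rw [hsets]
  -- apply the induction lemma
  have hmin : ∀ z ∈ D, z ≠ 0 → i + 1 ≤ Set.ncard {t : Fin p | v z t ≠ 0} := by
    intro z hzD hz
    have h1 : i + 1 ≤ (V z).support.card :=
      stmt12_base_min_weight (hVne z hz) (hdegV z) (hVdvd z (hDC hzD))
    refine le_trans h1 ?_
    have := stmt12_card_le_ncard hp.pos (V z) (hdegV z)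
    simpa [hv] using this
  exact lt_of_lt_of_le (show i + k - 1 < i + k by omega)
    (stmt12_supp_ind v i k hk D hDk hmin)
end

section
/- Let p be a prime, F_q a finite field of characteristic p, and let i be an integer with 0 ≤ i < p. Let C = ⟨(x − 1)^i⟩ ⊆ F_q[x]/⟨x^p − 1⟩. Then for every integer r with 1 ≤ r ≤ p − i, the r-th generalized Hamming weight of C satisfies d_r(C) = i + r. -/
set_option synthInstance.maxHeartbeats 1000000
set_option maxHeartbeats 1000000

open Polynomial

section Aux

lemma taylor_pow' {F : Type*} [CommRing F] (a : F) (q : F[X]) (n : ℕ) :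
    taylor a (q ^ n) = (taylor a q) ^ n := by
  induction n with
  | zero => simp [taylor_one]
  | succ n ih => rw [pow_succ, taylor_mul, ih, pow_succ]

lemma taylor_X_sub_one {F : Type*} [CommRing F] :
    taylor (1 : F) (X - 1) = X := by
  rw [map_sub, taylor_X, ← C_1, taylor_C]; ring

lemma dvd_iff_taylor {F : Type*} [CommRing F] (m : ℕ) (g : F[X]) :
    (X - 1) ^ m ∣ g ↔ X ^ m ∣ taylor (1 : F) g := by
  constructor
  · rintro ⟨u, rfl⟩
    exact ⟨taylor 1 u, by rw [taylor_mul, taylor_pow', taylor_X_sub_one]⟩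
  · rintro ⟨u, hu⟩
    refine ⟨taylor (-1 : F) u, ?_⟩
    have h := congrArg (taylor (-1 : F)) hu
    rw [taylor_taylor, neg_add_cancel, taylor_zero] at h
    rw [h, taylor_mul, taylor_pow', taylor_X]
    norm_num [sub_eq_add_neg]

lemma wt_lemma {p : ℕ} (hp : p.Prime) {F : Type*} [Field F] [CharP F p] :
    ∀ (m : ℕ) (g : F[X]), g ≠ 0 → g.natDegree < p → (X - 1) ^ m ∣ g →
      m + 1 ≤ g.support.card := by
  intro m
  induction m with
  | zero =>
    intro g hg _ _
    simpa [Nat.succ_le_iff, Finset.card_pos, Polynomial.support_nonempty] using hg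
  | succ m ih =>
    intro g hg hdeg hdvd
    have hne : g.support.Nonempty := Polynomial.support_nonempty.2 hg
    set j0 := g.support.min' hne with hj0def
    have hj0 : j0 ∈ g.support := Finset.min'_mem _ _
    -- eval at 1 is zero
    have heval : g.eval 1 = 0 := by
      obtain ⟨u, hu⟩ := hdvd
      rw [hu]; simp [pow_succ]
    -- there are at least two support elements
    have h2 : ∃ j1 ∈ g.support, j1 ≠ j0 := by
      by_contra hcon
      push_neg at hcon
      have hsupp : g.support = {j0} := by
        apply Finset.eq_singleton_iff_unique_mem.2 ⟨hj0, fun x hx => hcon x hx⟩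
      have : g.eval 1 = g.coeff j0 := by
        rw [Polynomial.eval_eq_sum, Polynomial.sum_def, hsupp]
        simp
      rw [heval] at this
      exact (Polynomial.mem_support_iff.1 hj0) this.symm
    obtain ⟨j1, hj1s, hj1ne⟩ := h2
    set h : F[X] := X * derivative g - C ((j0 : F)) * g with hdef
    have hcoeff : ∀ j : ℕ, h.coeff j = ((j : F) - (j0 : F)) * g.coeff j := by
      intro j
      cases j with
      | zero =>
        simp [hdef, Polynomial.mul_coeff_zero, Polynomial.coeff_C_mul]
      | succ n =>
        rw [hdef, Polynomial.coeff_sub, Polynomial.coeff_X_mul,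
          Polynomial.coeff_derivative, Polynomial.coeff_C_mul]
        push_cast
        ring
    have hdvd' : (X - 1 : F[X]) ^ m ∣ h := by
      obtain ⟨u, hu⟩ := hdvd
      have h1 : (X - 1 : F[X]) ^ m ∣ derivative g := by
        rw [hu, derivative_mul, derivative_pow]
        apply dvd_add
        · apply Dvd.dvd.mul_right
          apply Dvd.dvd.mul_right
          apply Dvd.dvd.mul_left
          exact pow_dvd_pow _ (by omega)
        · exact Dvd.dvd.mul_right (dvd_mul_of_dvd_left (pow_dvd_pow _ (by omega)) _) _
      have h2' : (X - 1 : F[X]) ^ m ∣ g := by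
        rw [hu]; exact Dvd.dvd.mul_right (pow_dvd_pow _ (by omega)) _
      exact dvd_sub (h1.mul_left _) (h2'.mul_left _)
    have hcast : ∀ j ∈ g.support, ∀ j' ∈ g.support, (j : F) = (j' : F) → j = j' := by
      intro j hj j' hj' hcasteq
      have hjp : j < p := lt_of_le_of_lt (Polynomial.le_natDegree_of_ne_zero
        (Polynomial.mem_support_iff.1 hj)) hdeg
      have hj'p : j' < p := lt_of_le_of_lt (Polynomial.le_natDegree_of_ne_zero
        (Polynomial.mem_support_iff.1 hj')) hdeg
      have := (CharP.natCast_eq_natCast F p).1 hcasteq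
      rwa [Nat.ModEq, Nat.mod_eq_of_lt hjp, Nat.mod_eq_of_lt hj'p] at this
    have hne' : h ≠ 0 := by
      intro hzero
      have := hcoeff j1
      rw [hzero, Polynomial.coeff_zero] at this
      have hg1 := Polynomial.mem_support_iff.1 hj1s
      have : ((j1 : F) - (j0 : F)) = 0 := by
        rcases mul_eq_zero.1 this.symm with h' | h'
        · exact h'
        · exact absurd h' hg1
      exact hj1ne (hcast j1 hj1s j0 hj0 (sub_eq_zero.1 this))
    have hsupsub : h.support ⊆ g.support.erase j0 := by
      intro j hj
      have hcj := Polynomial.mem_support_iff.1 hj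
      rw [hcoeff] at hcj
      have hgj : g.coeff j ≠ 0 := fun h' => hcj (by rw [h', mul_zero])
      have hjne : j ≠ j0 := by
        intro h'
        subst h'
        simp at hcj
      exact Finset.mem_erase.2 ⟨hjne, Polynomial.mem_support_iff.2 hgj⟩
    have hdegh : h.natDegree < p := by
      have hle : h.natDegree ≤ g.natDegree := by
        rw [Polynomial.natDegree_le_iff_coeff_eq_zero]
        intro N hN
        rw [hcoeff, Polynomial.coeff_eq_zero_of_natDegree_lt hN, mul_zero]
      omega
    have hih := ih h hne' hdegh hdvd'
    have hcard := Finset.card_le_card hsupsub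
    rw [Finset.card_erase_of_mem hj0] at hcard
    have hpos : 1 ≤ g.support.card := Finset.card_pos.2 hne
    omega

end Aux

/-- For the code `C = ⟨(x−1)^i⟩ ⊆ F_q[x]/⟨x^p − 1⟩` (with `0 ≤ i < p`) and every `r` with
`1 ≤ r ≤ p − i`, the `r`-th generalized Hamming weight satisfies `d_r(C) = i + r`, where
`d_r(C)` is the minimum cardinality of the support of an `r`-dimensional `F_q`-subspace of `C`.
Elements of the quotient are identified with the length-`p` coefficient vectors of their unique
representatives of degree `< p`. -/
theorem stmt_13 (p : ℕ) (hp : p.Prime) (F : Type) [Field F] [Fintype F] [CharP F p]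
    (i : ℕ) (hi : i < p)
    (I : Ideal (Polynomial F)) (hI : I = Ideal.span {Polynomial.X ^ p - 1})
    (C : Ideal (Polynomial F ⧸ I))
    (hC : C = Ideal.span {Ideal.Quotient.mk I ((Polynomial.X - 1) ^ i)}) :
    ∀ r : ℕ, 1 ≤ r → r ≤ p - i →
      sInf {w : ℕ | ∃ D : Submodule F (Polynomial F ⧸ I),
        D ≤ Submodule.restrictScalars F C ∧ Module.finrank F D = r ∧
        w = Set.ncard {t : Fin p | ∃ g : Polynomial F, g.natDegree < p ∧
          Ideal.Quotient.mk I g ∈ D ∧ g.coeff (t : ℕ) ≠ 0}} = i + r := by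
  intro r hr1 hr2
  haveI : Fact p.Prime := ⟨hp⟩
  subst hC
  subst hI
  have hirp : i + r ≤ p := by omega
  set f : F[X] := X ^ p - 1 with hfdef
  set mkq : F[X] →+* (F[X] ⧸ Ideal.span {f}) := Ideal.Quotient.mk (Ideal.span {f}) with hmkq
  have hfpow : f = (X - 1) ^ p := by
    rw [hfdef, sub_pow_char]; simp
  have hmon : f.Monic := by
    simpa [hfdef] using Polynomial.monic_X_pow_sub_C (1 : F) hp.ne_zero
  have hdegf : f.natDegree = p := by
    simpa [hfdef] using (Polynomial.natDegree_X_pow_sub_C (n := p) (r := (1:F)))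
  set rep : (F[X] ⧸ Ideal.span {f}) →ₗ[F] F[X] := AdjoinRoot.modByMonicHom hmon with hrepdef
  have hrep_mk : ∀ g : F[X], rep (mkq g) = g %ₘ f := fun g =>
    AdjoinRoot.modByMonicHom_mk hmon g
  have hmk_rep : ∀ z, mkq (rep z) = z := AdjoinRoot.mk_leftInverse hmon
  have hrep_inj : Function.Injective rep := Function.LeftInverse.injective hmk_rep
  have hdeg_rep : ∀ z, (rep z).natDegree < p := by
    intro z
    obtain ⟨g, rfl⟩ := Ideal.Quotient.mk_surjective (I := Ideal.span {f}) z
    rw [hrep_mk]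
    by_cases h0 : g %ₘ f = 0
    · rw [h0]; simpa using hp.pos
    · rw [Polynomial.natDegree_lt_iff_degree_lt h0]
      calc (g %ₘ f).degree < f.degree := Polynomial.degree_modByMonic_lt g hmon
        _ = (p : WithBot ℕ) := by rw [Polynomial.degree_eq_natDegree hmon.ne_zero, hdegf]
  have huniq : ∀ g h : F[X], g.natDegree < p → h.natDegree < p → mkq g = mkq h → g = h := by
    intro g h hg hh he
    have hmem : g - h ∈ Ideal.span {f} := Ideal.Quotient.eq.1 he
    have hdvd : f ∣ g - h := Ideal.mem_span_singleton.1 hmem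
    by_contra hne
    have hsub : g - h ≠ 0 := sub_ne_zero.2 hne
    have h1 := Polynomial.natDegree_le_of_dvd hdvd hsub
    have h2 := Polynomial.natDegree_sub_le g h
    omega
  have hmemC_dvd : ∀ z ∈ Ideal.span {mkq ((X - 1) ^ i)}, (X - 1) ^ i ∣ rep z := by
    intro z hz
    rw [Ideal.mem_span_singleton'] at hz
    obtain ⟨u, hu⟩ := hz
    obtain ⟨h, rfl⟩ := Ideal.Quotient.mk_surjective (I := Ideal.span {f}) u
    rw [← map_mul] at hu
    rw [← hu, hrep_mk, Polynomial.modByMonic_eq_sub_mul_div _ f]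
    apply dvd_sub
    · exact Dvd.dvd.mul_left dvd_rfl h
    · rw [hfpow]; exact ((pow_dvd_pow _ hi.le).mul_right _)
  -- the spanning family for the optimal subspace
  have hmonx : (X - 1 : Polynomial F).Monic := by
    simpa using Polynomial.monic_X_sub_C (1 : F)
  have hndx : (X - 1 : Polynomial F).natDegree = 1 := by
    simpa using Polynomial.natDegree_X_sub_C (1 : F)
  set v : Fin r → (Polynomial F ⧸ Ideal.span {f}) :=
    fun k => mkq ((X - 1) ^ (i + (k : ℕ))) with hvdef
  have hvC : ∀ k, v k ∈ Ideal.span {mkq ((X - 1) ^ i)} := by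
    intro k
    have hv : v k = mkq ((X - 1) ^ i) * mkq ((X - 1) ^ (k : ℕ)) := by
      rw [← map_mul, ← pow_add]
    rw [hv]
    exact Ideal.mul_mem_right _ _ (Ideal.subset_span (Set.mem_singleton _))
  have hrep_v : ∀ k : Fin r, rep (v k) = (X - 1) ^ (i + (k : ℕ)) := by
    intro k
    have hq0 : ((X - 1 : Polynomial F) ^ (i + (k : ℕ))) ≠ 0 := (hmonx.pow _).ne_zero
    have hdq : ((X - 1 : Polynomial F) ^ (i + (k : ℕ))).natDegree = i + (k : ℕ) := by
      rw [Polynomial.natDegree_pow, hndx, mul_one]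
    show rep (mkq _) = _
    rw [hrep_mk]
    apply (Polynomial.modByMonic_eq_self_iff hmon).2
    rw [Polynomial.degree_eq_natDegree hq0, Polynomial.degree_eq_natDegree hmon.ne_zero,
      hdq, hdegf]
    exact_mod_cast (by have := k.2; omega : i + (k : ℕ) < p)
  have hTv : ∀ k : Fin r, taylor (1 : F) (rep (v k)) = X ^ (i + (k : ℕ)) := by
    intro k
    rw [hrep_v, taylor_pow', taylor_X_sub_one]
  have hlin : LinearIndependent F v := by
    have hmono : LinearIndependent F (fun k : Fin r => (X : Polynomial F) ^ (i + (k : ℕ))) := by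
      rw [Fintype.linearIndependent_iff]
      intro c hc k
      have hco := congrArg (fun q => Polynomial.coeff q (i + (k : ℕ))) hc
      simp only [Polynomial.finset_sum_coeff, Polynomial.coeff_smul, Polynomial.coeff_X_pow,
        Polynomial.coeff_zero, smul_eq_mul] at hco
      rw [Finset.sum_eq_single k] at hco
      · simpa using hco
      · intro b _ hb
        have hne : ¬ (i + (k : ℕ) = i + (b : ℕ)) := fun h => hb (Fin.ext (by omega)).symm
        rw [if_neg hne, mul_zero]
      · simp
    apply LinearIndependent.of_comp ((taylor (1 : F)).comp rep)
    have heq : (⇑((taylor (1 : F)).comp rep) ∘ v) =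
        fun k : Fin r => (X : Polynomial F) ^ (i + (k : ℕ)) := by
      funext k
      simp only [Function.comp_apply, LinearMap.comp_apply]
      exact hTv k
    rw [heq]
    exact hmono
  set D0 : Submodule F (Polynomial F ⧸ Ideal.span {f}) := Submodule.span F (Set.range v)
    with hD0def
  have hD0C : D0 ≤ Submodule.restrictScalars F (Ideal.span {mkq ((X - 1) ^ i)}) := by
    rw [hD0def, Submodule.span_le]
    rintro _ ⟨k, rfl⟩
    exact hvC k
  have hD0r : Module.finrank F D0 = r := by
    rw [hD0def, finrank_span_eq_card hlin, Fintype.card_fin]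
  -- support of D0
  have hsupp_eq : {t : Fin p | ∃ g : Polynomial F, g.natDegree < p ∧ mkq g ∈ D0 ∧
      g.coeff (t : ℕ) ≠ 0} = {t : Fin p | (t : ℕ) < i + r} := by
    ext t
    simp only [Set.mem_setOf_eq]
    constructor
    · rintro ⟨g, hdegg, hg, hcoeff⟩
      rw [hD0def, Submodule.mem_span_range_iff_exists_fun] at hg
      obtain ⟨c, hc⟩ := hg
      set g0 : Polynomial F := ∑ k : Fin r, c k • (X - 1) ^ (i + (k : ℕ)) with hg0
      have hdeg0 : g0.natDegree ≤ i + r - 1 := by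
        apply Polynomial.natDegree_sum_le_of_forall_le
        intro k _
        refine le_trans (Polynomial.natDegree_smul_le _ _) ?_
        rw [Polynomial.natDegree_pow, hndx, mul_one]
        have := k.2; omega
      have hsmul : ∀ (a : F) (q : Polynomial F), mkq (a • q) = a • mkq q := by
        intro a q
        exact map_smul (Ideal.Quotient.mkₐ F (Ideal.span {f})) a q
      have hmkg0 : mkq g0 = mkq g := by
        have hs : mkq g0 = ∑ k : Fin r, c k • v k := by
          rw [hg0, map_sum]
          exact Finset.sum_congr rfl fun k _ => hsmul _ _
        rw [hs, hc]
      have hgg0 : g = g0 := huniq g g0 hdegg (by omega) hmkg0.symm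
      have hle := Polynomial.le_natDegree_of_ne_zero (hgg0 ▸ hcoeff)
      omega
    · intro ht
      have hkey : (X - 1 : Polynomial F) ^ (i + r - 1) =
          (X - 1) ^ (i + ((⟨r - 1, by omega⟩ : Fin r) : ℕ)) := by
        congr 1
        simp only []
        omega
      refine ⟨(X - 1) ^ (i + r - 1), ?_, ?_, ?_⟩
      · rw [Polynomial.natDegree_pow, hndx, mul_one]; omega
      · rw [hkey]
        exact Submodule.subset_span ⟨_, rfl⟩
      · have h1 : (X - 1 : Polynomial F) = X + C (-1) := by
          rw [C_neg, C_1]; ring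
        rw [h1, Polynomial.coeff_X_add_C_pow]
        apply mul_ne_zero
        · exact pow_ne_zero _ (neg_ne_zero.2 one_ne_zero)
        · rw [Ne, CharP.cast_eq_zero_iff F p]
          intro hdvd
          have hle : (t : ℕ) ≤ i + r - 1 := by omega
          have hfact := Nat.choose_mul_factorial_mul_factorial hle
          have hdvd' : p ∣ Nat.factorial (i + r - 1) :=
            hfact ▸ ((hdvd.mul_right _).mul_right _)
          have := (Nat.Prime.dvd_factorial hp).1 hdvd'
          omega
  have hncard : Set.ncard {t : Fin p | (t : ℕ) < i + r} = i + r := by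
    have he : {t : Fin p | (t : ℕ) < i + r} = Set.range (Fin.castLE hirp) := by
      ext t
      simp only [Set.mem_setOf_eq, Set.mem_range]
      constructor
      · intro ht; exact ⟨⟨(t : ℕ), ht⟩, by ext; rfl⟩
      · rintro ⟨s, rfl⟩; exact s.2
    rw [he, ← Nat.card_coe_set_eq,
      Nat.card_range_of_injective (Fin.castLE_injective hirp), Nat.card_eq_fintype_card,
      Fintype.card_fin]
  have hmem : i + r ∈ {w : ℕ | ∃ D : Submodule F (Polynomial F ⧸ Ideal.span {f}),
      D ≤ Submodule.restrictScalars F (Ideal.span {mkq ((X - 1) ^ i)}) ∧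
      Module.finrank F D = r ∧
      w = Set.ncard {t : Fin p | ∃ g : Polynomial F, g.natDegree < p ∧
        mkq g ∈ D ∧ g.coeff (t : ℕ) ≠ 0}} := by
    exact ⟨D0, hD0C, hD0r, by rw [hsupp_eq, hncard]⟩
  -- lower bound
  have hlb : ∀ w ∈ {w : ℕ | ∃ D : Submodule F (Polynomial F ⧸ Ideal.span {f}),
      D ≤ Submodule.restrictScalars F (Ideal.span {mkq ((X - 1) ^ i)}) ∧
      Module.finrank F D = r ∧
      w = Set.ncard {t : Fin p | ∃ g : Polynomial F, g.natDegree < p ∧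
        mkq g ∈ D ∧ g.coeff (t : ℕ) ≠ 0}}, i + r ≤ w := by
    rintro w ⟨D, hDC, hDr, rfl⟩
    set Φ : D →ₗ[F] (Fin (r - 1) → F) := LinearMap.pi
      (fun j : Fin (r - 1) => (Polynomial.lcoeff F (i + (j : ℕ))).comp
        (((taylor (1 : F)).comp rep).comp D.subtype)) with hΦdef
    have hker : LinearMap.ker Φ ≠ ⊥ := by
      intro hbot
      have hinj : Function.Injective Φ := LinearMap.ker_eq_bot.1 hbot
      have hle := LinearMap.finrank_le_finrank_of_injective hinj
      rw [hDr, Module.finrank_fin_fun] at hle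
      omega
    obtain ⟨d, hdker, hdne⟩ := Submodule.exists_mem_ne_zero_of_ne_bot hker
    have hzD : (d : Polynomial F ⧸ Ideal.span {f}) ∈ D := d.2
    have hzne : (d : Polynomial F ⧸ Ideal.span {f}) ≠ 0 := by
      intro h
      exact hdne (Subtype.ext h)
    set g := rep (d : Polynomial F ⧸ Ideal.span {f}) with hgdef
    have hgne : g ≠ 0 := by
      intro h
      apply hzne
      rw [← hmk_rep (d : Polynomial F ⧸ Ideal.span {f}), ← hgdef, h, map_zero]
    have hgdeg : g.natDegree < p := hdeg_rep _
    have hdvdg : (X - 1 : Polynomial F) ^ (i + r - 1) ∣ g := by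
      rw [dvd_iff_taylor, Polynomial.X_pow_dvd_iff]
      intro dd hdd
      by_cases hdi : dd < i
      · have h1 : (X - 1 : Polynomial F) ^ i ∣ g := hmemC_dvd _ (hDC hzD)
        rw [dvd_iff_taylor, Polynomial.X_pow_dvd_iff] at h1
        exact h1 dd hdi
      · push_neg at hdi
        have hj : dd - i < r - 1 := by omega
        have hΦ0 : Φ d = 0 := LinearMap.mem_ker.1 hdker
        have hco := congrFun hΦ0 ⟨dd - i, hj⟩
        simp only [hΦdef, LinearMap.pi_apply, LinearMap.comp_apply, Submodule.coe_subtype,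
          Polynomial.lcoeff_apply, Pi.zero_apply] at hco
        have hdd' : i + (dd - i) = dd := by omega
        rw [hdd'] at hco
        exact hco
    have hwt := wt_lemma hp (i + r - 1) g hgne hgdeg hdvdg
    have hsuppb : ∀ s ∈ g.support, s < p := fun s hs =>
      lt_of_le_of_lt (Polynomial.le_natDegree_of_ne_zero (Polynomial.mem_support_iff.1 hs)) hgdeg
    have hsub : (↑(g.support.attachFin hsuppb) : Set (Fin p)) ⊆
        {t : Fin p | ∃ g' : Polynomial F, g'.natDegree < p ∧ mkq g' ∈ D ∧
          g'.coeff (t : ℕ) ≠ 0} := by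
      intro t ht
      rw [Finset.mem_coe, Finset.mem_attachFin] at ht
      refine ⟨g, hgdeg, ?_, Polynomial.mem_support_iff.1 ht⟩
      rw [hgdef, hmk_rep]
      exact hzD
    calc i + r = (i + r - 1) + 1 := by omega
      _ ≤ g.support.card := hwt
      _ = (g.support.attachFin hsuppb).card := (Finset.card_attachFin _ _).symm
      _ = (↑(g.support.attachFin hsuppb) : Set (Fin p)).ncard :=
          (Set.ncard_coe_finset _).symm
      _ ≤ _ := Set.ncard_le_ncard hsub (Set.toFinite _)
  exact le_antisymm (Nat.sInf_le hmem) (le_csInf ⟨_, hmem⟩ hlb)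
end
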